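/- arXiv:0804.0624 — 6 statements merged into one kernel-verified Lean document; each statement's English description precedes it below -/
import Mathlib

section
/- In the free group F₂ on α, β, for every nonnegative integer r, the number of elements of word length exactly 2r+1 that are of the form w·αᵏ·w⁻¹ for some w ∈ F₂ and some integer k is 2·3^r. -/
abbrev F2 := FreeGroup (Fin 2)

def α : F2 := FreeGroup.of 0

def β : F2 := FreeGroup.of 1

/-- `C(γ, n)`: elements of word length exactly `n` of the form `w·γᵏ·w⁻¹`. -/
def C (γ : F2) (n : ℕ) : Set F2 :=
  {g : F2 | FreeGroup.norm g = n ∧ ∃ (w : F2) (k : ℤ), g = w * γ ^ k * w⁻¹}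

namespace CountProof

abbrev Letter := Fin 2 × Bool
abbrev Word := List Letter

open FreeGroup List

/-- adjacent-pair non-cancellation relation -/
def rel (a b : Letter) : Prop := ¬(a.1 = b.1 ∧ a.2 = !b.2)

instance : DecidableEq Letter := inferInstance
instance (a b : Letter) : Decidable (rel a b) := by unfold rel; infer_instance

lemma rel_symm {a b : Letter} (h : rel a b) : rel b a := by
  rcases a with ⟨a1, a2⟩; rcases b with ⟨b1, b2⟩
  simp only [rel, not_and] at *
  rintro rfl; cases a2 <;> cases b2 <;> simp_all

theorem reduce_eq_self_iff (L : Word) : reduce L = L ↔ List.Chain' rel L := by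
  induction L with
  | nil => simp [List.Chain', List.isChain_nil]
  | cons x L ih =>
    constructor
    · intro h
      rw [reduce.cons] at h
      rcases hL : reduce L with - | ⟨hd, tl⟩
      · rw [hL] at h
        injection h with _ h2
        simp [← h2, List.Chain', List.isChain_singleton]
      · rw [hL] at h
        replace h : (if x.1 = hd.1 ∧ x.2 = !hd.2 then tl else x :: hd :: tl) = x :: L := h
        by_cases hc : x.1 = hd.1 ∧ x.2 = !hd.2
        · rw [if_pos hc] at h
          have : tl.length < L.length + 1 := by
            have h1 : (reduce L).length ≤ L.length := (reduce.red (L := L)).length_le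
            rw [hL] at h1; simp at h1; omega
          rw [h] at this; simp at this
        · rw [if_neg hc] at h
          have hL' : L = hd :: tl := by
            injection h with h1 h2; exact h2.symm
          have hred : reduce L = L := by rw [hL, ← hL']
          rw [hL']
          refine List.isChain_cons_cons.2 ⟨hc, ?_⟩
          rw [← hL']; exact ih.1 hred
    · intro h
      have hL : reduce L = L := ih.2 h.tail
      rw [reduce.cons, hL]
      cases L with
      | nil => rfl
      | cons hd tl =>
        have hrel : rel x hd := (List.isChain_cons_cons.1 h).1
        simp only [rel] at hrel
        simp [hrel]

theorem chain'_of_reduce {L : Word} (h : reduce L = L) : List.Chain' rel L :=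
  (reduce_eq_self_iff L).1 h

theorem toWord_chain' (g : F2) : List.Chain' rel g.toWord :=
  chain'_of_reduce (reduce_toWord g)

theorem toWord_mk_of_chain' {L : Word} (h : List.Chain' rel L) :
    (FreeGroup.mk L).toWord = L := by
  rw [toWord_mk, (reduce_eq_self_iff L).2 h]


def lastOk (L : Word) : Prop := ∀ x ∈ L.getLast?, x.1 = 1

lemma chain'_invRev {L : Word} (h : List.Chain' rel L) : List.Chain' rel (invRev L) :=
  chain'_of_reduce (by rw [reduce_invRev, (reduce_eq_self_iff L).2 h])

lemma head?_invRev (L : Word) :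
    (invRev L).head? = L.getLast?.map (fun x => (x.1, !x.2)) := by
  simp [invRev, List.head?_reverse, List.getLast?_map]

lemma invRev_append (L M : Word) : invRev (L ++ M) = invRev M ++ invRev L := by
  simp [invRev]

lemma invRev_replicate (j : ℕ) (a : Fin 2) (b : Bool) :
    invRev (List.replicate j (a, b)) = List.replicate j (a, !b) := by
  simp [invRev, List.map_replicate]

lemma alpha_pow_nat (j : ℕ) : α ^ j = FreeGroup.mk (List.replicate j ((0 : Fin 2), true)) := by
  have := toWord_of_pow (0 : Fin 2) j
  rw [← this, mk_toWord]; rfl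

lemma alpha_zpow_pos (j : ℕ) : α ^ (j : ℤ) = FreeGroup.mk (List.replicate j ((0 : Fin 2), true)) := by
  rw [zpow_natCast, alpha_pow_nat]

lemma alpha_zpow_neg (j : ℕ) : α ^ (-(j : ℤ)) = FreeGroup.mk (List.replicate j ((0 : Fin 2), false)) := by
  rw [zpow_neg, zpow_natCast, alpha_pow_nat, inv_mk, invRev_replicate]; norm_num

lemma alpha_zpow_mk (b : Bool) (j : ℕ) :
    FreeGroup.mk (List.replicate j ((0 : Fin 2), b)) = α ^ (if b then (j : ℤ) else -(j : ℤ)) := by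
  cases b
  · rw [show (if (false : Bool) then (j : ℤ) else -(j : ℤ)) = -(j : ℤ) from rfl, alpha_zpow_neg]
  · rw [show (if (true : Bool) then (j : ℤ) else -(j : ℤ)) = (j : ℤ) from rfl, alpha_zpow_pos]

lemma chain'_canonical {U : Word} (hU : List.Chain' rel U) (hlast : lastOk U) (b : Bool)
    {j : ℕ} (hj : 1 ≤ j) :
    List.Chain' rel (U ++ List.replicate j ((0 : Fin 2), b) ++ invRev U) := by
  apply List.IsChain.append
  · apply List.IsChain.append hU
    · exact List.isChain_replicate_of_rel j (by simp [rel])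
    · intro x hx y hy
      have hx1 := hlast x hx
      have : y = ((0 : Fin 2), b) := by
        obtain ⟨m, rfl⟩ : ∃ m, j = m + 1 := ⟨j - 1, by omega⟩
        rw [List.replicate_succ] at hy
        simp only [List.head?_cons, Option.mem_def, Option.some.injEq] at hy
        exact hy.symm
      subst this
      simp [rel, hx1]
  · exact chain'_invRev hU
  · intro x hx y hy
    have hx' : x = ((0 : Fin 2), b) := by
      obtain ⟨m, rfl⟩ : ∃ m, j = m + 1 := ⟨j - 1, by omega⟩
      rw [List.replicate_succ', ← List.append_assoc, List.getLast?_concat] at hx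
      simp only [Option.mem_def, Option.some.injEq] at hx
      exact hx.symm
    subst hx'
    rw [head?_invRev] at hy
    simp only [Option.mem_def, Option.map_eq_some_iff] at hy
    obtain ⟨z, hz, rfl⟩ := hy
    have := hlast z hz
    simp [rel, this]

lemma canonical_toWord {U : Word} (hU : List.Chain' rel U) (hlast : lastOk U) (b : Bool)
    {j : ℕ} (hj : 1 ≤ j) :
    (FreeGroup.mk (U ++ List.replicate j ((0 : Fin 2), b) ++ invRev U)).toWord
      = U ++ List.replicate j ((0 : Fin 2), b) ++ invRev U :=
  toWord_mk_of_chain' (chain'_canonical hU hlast b hj)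

lemma strip : ∀ (n : ℕ) (w : F2), FreeGroup.norm w = n →
    ∃ (u : F2) (m : ℤ), w = u * α ^ m ∧ lastOk u.toWord := by
  intro n
  induction n using Nat.strong_induction_on with
  | _ n ih =>
    intro w hn
    by_cases h : lastOk w.toWord
    · exact ⟨w, 0, by simp, h⟩
    · simp only [lastOk, not_forall] at h
      obtain ⟨x, hx, hx1⟩ := h
      have hx1 : x.1 = 0 := by omega
      have hne : w.toWord ≠ [] := by
        intro h0; rw [h0] at hx; simp at hx
      have hsplit : w.toWord.dropLast ++ [x] = w.toWord := by
        have hgl : w.toWord.getLast hne = x := by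
          have h2 := List.getLast?_eq_getLast hne
          have hx' := hx
          rw [Option.mem_def, h2, Option.some.injEq] at hx'
          exact hx'
        rw [← hgl]; exact List.dropLast_append_getLast hne
      set L := w.toWord.dropLast with hL
      set b := x.2 with hb
      have hxeq : x = ((0 : Fin 2), b) := Prod.ext hx1 rfl
      have hw : w = FreeGroup.mk L * FreeGroup.mk [((0 : Fin 2), b)] := by
        rw [mul_mk, ← hxeq, hsplit, mk_toWord]
      have hLred : (FreeGroup.mk L).toWord = L := by
        apply toWord_mk_of_chain'
        have := toWord_chain' w
        rw [← hsplit] at this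
        exact (List.isChain_append.1 this).1
      have hnorm : FreeGroup.norm (FreeGroup.mk L) < n := by
        rw [FreeGroup.norm, hLred, hL]
        have : w.toWord.length = n := hn
        have hpos : 0 < w.toWord.length := List.length_pos_iff.2 hne
        rw [List.length_dropLast]; omega
      obtain ⟨u, m, hum, hlast⟩ := ih _ hnorm (FreeGroup.mk L) rfl
      refine ⟨u, m + (if b then (1 : ℤ) else -1), ?_, hlast⟩
      have hmk : FreeGroup.mk [((0 : Fin 2), b)] = α ^ (if b then (1 : ℤ) else -1) := by
        simpa using alpha_zpow_mk b 1
      rw [hw, hum, hmk, mul_assoc, ← zpow_add]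


lemma conj_mk (u : F2) (M : Word) :
    u * FreeGroup.mk M * u⁻¹ = FreeGroup.mk (u.toWord ++ M ++ invRev u.toWord) := by
  conv_lhs => rw [← mk_toWord (x := u)]
  rw [inv_mk, mul_mk, mul_mk]

lemma mem_C_iff (r : ℕ) (g : F2) :
    g ∈ C α (2 * r + 1) ↔ ∃ (b : Bool) (U : Word) (j : ℕ),
      List.Chain' rel U ∧ lastOk U ∧ 1 ≤ j ∧ 2 * U.length + j = 2 * r + 1 ∧
      g = FreeGroup.mk (U ++ List.replicate j ((0 : Fin 2), b) ++ invRev U) := by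
  constructor
  · rintro ⟨hnorm, w, k, rfl⟩
    obtain ⟨u, m, hw, hlast⟩ := strip (FreeGroup.norm w) w rfl
    have hg : w * α ^ k * w⁻¹ = u * α ^ k * u⁻¹ := by
      rw [hw]; group
    have hk0 : k ≠ 0 := by
      rintro rfl
      have h1 : w * α ^ (0 : ℤ) * w⁻¹ = 1 := by group
      rw [h1] at hnorm
      simp at hnorm
    have hrep : ∃ (b : Bool) (j : ℕ), 1 ≤ j ∧
        α ^ k = FreeGroup.mk (List.replicate j ((0 : Fin 2), b)) := by
      rcases lt_trichotomy k 0 with hk | hk | hk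
      · refine ⟨false, k.natAbs, by omega, ?_⟩
        rw [← alpha_zpow_neg]; congr 1; omega
      · exact absurd hk hk0
      · refine ⟨true, k.natAbs, by omega, ?_⟩
        rw [← alpha_zpow_pos]; congr 1; omega
    obtain ⟨b, j, hj, hαk⟩ := hrep
    refine ⟨b, u.toWord, j, toWord_chain' u, hlast, hj, ?_, ?_⟩
    · have hgeq : w * α ^ k * w⁻¹
          = FreeGroup.mk (u.toWord ++ List.replicate j ((0 : Fin 2), b) ++ invRev u.toWord) := by
        rw [hg, hαk, conj_mk]
      rw [hgeq, FreeGroup.norm, canonical_toWord (toWord_chain' u) hlast b hj] at hnorm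
      simp only [List.length_append, List.length_replicate, invRev_length] at hnorm
      omega
    · rw [hg, hαk, conj_mk]
  · rintro ⟨b, U, j, hch, hlast, hj, hlen, rfl⟩
    constructor
    · rw [FreeGroup.norm, canonical_toWord hch hlast b hj]
      simp only [List.length_append, List.length_replicate, invRev_length]
      omega
    · refine ⟨FreeGroup.mk U, if b then (j : ℤ) else -(j : ℤ), ?_⟩
      rw [← alpha_zpow_mk, inv_mk, mul_mk, mul_mk]


lemma decomp_eq {U U' : Word} {j j' : ℕ} {b b' : Bool}
    (hlast : lastOk U') (hj : 1 ≤ j) (hj' : 1 ≤ j') (hle : U.length ≤ U'.length)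
    (heq : U ++ List.replicate j ((0 : Fin 2), b) ++ invRev U
      = U' ++ List.replicate j' ((0 : Fin 2), b') ++ invRev U') :
    U = U' ∧ b = b' := by
  have hpre : U <+: U' := by
    have h1 : U <+: U ++ (List.replicate j ((0 : Fin 2), b) ++ invRev U) :=
      List.prefix_append _ _
    have h2 : U' <+: U' ++ (List.replicate j' ((0 : Fin 2), b') ++ invRev U') :=
      List.prefix_append _ _
    rw [← List.append_assoc] at h1 h2
    rw [heq] at h1
    exact List.prefix_of_prefix_length_le h1 h2 hle
  obtain ⟨V, rfl⟩ := hpre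
  rw [invRev_append] at heq
  simp only [List.append_assoc] at heq
  replace heq := List.append_cancel_left heq
  rw [show V ++ (List.replicate j' ((0 : Fin 2), b') ++ (invRev V ++ invRev U))
      = (V ++ List.replicate j' ((0 : Fin 2), b') ++ invRev V) ++ invRev U by
    simp [List.append_assoc]] at heq
  replace heq := List.append_cancel_right heq
  -- heq : replicate j (0,b) = V ++ replicate j' (0,b') ++ invRev V
  have hV : V = [] := by
    by_contra hVne
    have hVpre : V <+: List.replicate j ((0 : Fin 2), b) :=
      ⟨List.replicate j' ((0 : Fin 2), b') ++ invRev V, by rw [heq]; simp [List.append_assoc]⟩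
    have hlastV : (U ++ V).getLast? = some ((0 : Fin 2), b) := by
      rw [List.getLast?_append_of_ne_nil _ hVne,
        List.getLast?_eq_getLast hVne, Option.some.injEq]
      exact List.eq_of_mem_replicate (hVpre.subset (List.getLast_mem hVne))
    have := hlast _ (by rw [hlastV]; rfl)
    simp at this
  subst hV
  simp only [invRev_empty, List.nil_append, List.append_nil] at heq
  have hjj : j = j' := by
    have := congrArg List.length heq
    simpa using this
  subst hjj
  have hb : b = b' := by
    have := congrArg List.head? heq
    obtain ⟨m, rfl⟩ : ∃ m, j = m + 1 := ⟨j - 1, by omega⟩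
    simp [List.replicate_succ] at this
    exact this
  simp [hb]

def genF : ℕ → Finset Letter → Finset Word
  | 0, _ => {[]}
  | (ℓ+1), A => insert []
      (A.biUnion fun y => (genF ℓ (Finset.univ.erase (y.1, !y.2))).image (y :: ·))

lemma rel_iff (y h : Letter) : rel y h ↔ h ≠ (y.1, !y.2) := by
  rcases y with ⟨y1, y2⟩; rcases h with ⟨h1, h2⟩
  simp only [rel, ne_eq, Prod.mk.injEq, not_and]
  cases y2 <;> cases h2 <;> simp [eq_comm]

lemma mem_genF : ∀ (ℓ : ℕ) (A : Finset Letter) (V : Word),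
    V ∈ genF ℓ A ↔ V.length ≤ ℓ ∧ List.Chain' rel V ∧ ∀ h ∈ V.head?, h ∈ A := by
  intro ℓ
  induction ℓ with
  | zero =>
    intro A V
    simp only [genF, Finset.mem_singleton]
    constructor
    · rintro rfl; simp [List.Chain', List.isChain_nil]
    · rintro ⟨h1, -, -⟩; exact List.length_eq_zero_iff.1 (Nat.le_zero.1 h1)
  | succ ℓ ih =>
    intro A V
    cases V with
    | nil => simp [genF, List.Chain', List.isChain_nil]
    | cons y W =>
      simp only [genF, Finset.mem_insert, Finset.mem_biUnion, Finset.mem_image]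
      constructor
      · rintro (h | ⟨y', hy', W', hW', heq⟩)
        · exact absurd h (by simp)
        · injection heq with h1 h2
          subst h1; subst h2
          obtain ⟨hlen, hch, hhd⟩ := (ih _ _).1 hW'
          refine ⟨by simpa using Nat.succ_le_succ hlen, ?_, ?_⟩
          · simp only [List.Chain'] at hch ⊢; rw [List.isChain_cons]
            refine ⟨fun z hz => ?_, hch⟩
            have hz' := hhd z hz
            rw [Finset.mem_erase] at hz'
            exact (rel_iff _ z).2 hz'.1
          · intro h hh; simp at hh; subst hh; exact hy'
      · rintro ⟨hlen, hch, hhd⟩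
        right
        refine ⟨y, hhd y (by simp), W,
          (ih _ _).2 ⟨by simpa using hlen, (List.isChain_cons.1 hch).2, ?_⟩, rfl⟩
        intro z hz
        rw [Finset.mem_erase]
        exact ⟨(rel_iff y z).1 ((List.isChain_cons.1 hch).1 z hz), Finset.mem_univ z⟩

lemma card_genF : ∀ (ℓ : ℕ) (A : Finset Letter),
    2 * (genF ℓ A).card = 2 + A.card * (3 ^ ℓ - 1) := by
  intro ℓ
  induction ℓ with
  | zero => intro A; simp [genF]
  | succ ℓ ih =>
    intro A
    have hnotmem : ([] : Word) ∉
        A.biUnion fun y => (genF ℓ (Finset.univ.erase (y.1, !y.2))).image (y :: ·) := by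
      simp
    rw [genF, Finset.card_insert_of_notMem hnotmem, Finset.card_biUnion]
    · have hterm : ∀ y : Letter,
          2 * ((genF ℓ (Finset.univ.erase (y.1, !y.2))).image (y :: ·)).card
            = 3 ^ (ℓ + 1) - 1 := by
        intro y
        rw [Finset.card_image_of_injective _ (fun a b h => by injection h)]
        rw [ih]
        rw [Finset.card_erase_of_mem (Finset.mem_univ _)]
        have h4 : (Finset.univ : Finset Letter).card = 4 := by decide
        rw [h4]
        have h3 : 3 ^ (ℓ + 1) = 3 * 3 ^ ℓ := by ring
        have hp : 1 ≤ 3 ^ ℓ := Nat.one_le_pow _ _ (by norm_num)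
        omega
      have hsum : 2 * (∑ y ∈ A, ((genF ℓ (Finset.univ.erase (y.1, !y.2))).image (y :: ·)).card)
          = A.card * (3 ^ (ℓ + 1) - 1) := by
        rw [Finset.mul_sum]
        rw [Finset.sum_congr rfl (fun y _ => hterm y)]
        rw [Finset.sum_const, smul_eq_mul]
      omega
    · intro x hx y hy hxy
      simp only [Function.onFun]; rw [Finset.disjoint_left]
      intro a ha hb
      rw [Finset.mem_image] at ha hb
      obtain ⟨W1, -, rfl⟩ := ha
      obtain ⟨W2, -, hab⟩ := hb
      injection hab with h1 _
      exact hxy h1.symm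


def topA : Finset Letter := {((1 : Fin 2), true), ((1 : Fin 2), false)}

lemma mem_topA_iff : ∀ z : Letter, z ∈ topA ↔ z.1 = 1 := by decide

def fmap (r : ℕ) : Bool × Word → F2 := fun p =>
  FreeGroup.mk (p.2.reverse ++ List.replicate (2 * r + 1 - 2 * p.2.length) ((0 : Fin 2), p.1)
    ++ invRev p.2.reverse)

def D (r : ℕ) : Finset (Bool × Word) := (Finset.univ : Finset Bool) ×ˢ genF r topA

lemma chain'_reverse_rel {V : Word} (h : List.Chain' rel V) : List.Chain' rel V.reverse := by
  simp only [List.Chain'] at h ⊢; rw [List.isChain_reverse]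
  exact h.imp fun a b hab => rel_symm hab

lemma lastOk_reverse {V : Word} (hhd : ∀ h ∈ V.head?, h ∈ topA) : lastOk V.reverse := by
  intro x hx
  rw [List.getLast?_reverse] at hx
  exact (mem_topA_iff x).1 (hhd x hx)

lemma C_eq (r : ℕ) : C α (2 * r + 1) = ↑((D r).image (fmap r)) := by
  ext g
  rw [Finset.coe_image, Set.mem_image, mem_C_iff]
  constructor
  · rintro ⟨b, U, j, hch, hlast, hj, hlen, rfl⟩
    refine ⟨(b, U.reverse), ?_, ?_⟩
    · rw [Finset.mem_coe, D, Finset.mem_product]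
      refine ⟨Finset.mem_univ _, (mem_genF _ _ _).2 ⟨by simp; omega, chain'_reverse_rel hch, ?_⟩⟩
      intro h hh
      rw [List.head?_reverse] at hh
      rw [mem_topA_iff]
      exact hlast h hh
    · show FreeGroup.mk _ = _
      simp only [fmap, List.reverse_reverse, List.length_reverse]
      have hjeq : 2 * r + 1 - 2 * U.length = j := by omega
      rw [hjeq]
  · rintro ⟨⟨b, V⟩, hmem, rfl⟩
    rw [Finset.mem_coe, D, Finset.mem_product] at hmem
    obtain ⟨-, hV⟩ := hmem
    obtain ⟨hlen, hch, hhd⟩ := (mem_genF _ _ _).1 hV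
    dsimp only at hlen hch hhd
    refine ⟨b, V.reverse, 2 * r + 1 - 2 * V.length, chain'_reverse_rel hch,
      lastOk_reverse hhd, by omega, by simp; omega, ?_⟩
    simp only [fmap, List.length_reverse]

lemma fmap_injOn (r : ℕ) : Set.InjOn (fmap r) ↑(D r) := by
  have key : ∀ (b b' : Bool) (V V' : Word), (b, V) ∈ D r → (b', V') ∈ D r →
      V.length ≤ V'.length → fmap r (b, V) = fmap r (b', V') → (b, V) = (b', V') := by
    intro b b' V V' hm hm' hle heq
    rw [D, Finset.mem_product] at hm hm'
    obtain ⟨hlV, hcV, hhV⟩ := (mem_genF _ _ _).1 hm.2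
    obtain ⟨hlV', hcV', hhV'⟩ := (mem_genF _ _ _).1 hm'.2
    dsimp only at hlV hcV hhV hlV' hcV' hhV'
    have hj : 1 ≤ 2 * r + 1 - 2 * V.length := by omega
    have hj' : 1 ≤ 2 * r + 1 - 2 * V'.length := by omega
    have hw := congrArg FreeGroup.toWord heq
    simp only [fmap] at hw
    rw [canonical_toWord (chain'_reverse_rel hcV) (lastOk_reverse hhV) _ (by simpa using hj),
      canonical_toWord (chain'_reverse_rel hcV') (lastOk_reverse hhV') _ (by simpa using hj')]
      at hw
    have := decomp_eq (lastOk_reverse hhV') (by simpa using hj) (by simpa using hj')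
      (by simpa using hle) hw
    obtain ⟨hUV, hbb⟩ := this
    have hVV : V = V' := by
      have := congrArg List.reverse hUV
      simpa using this
    rw [hbb, hVV]
  rintro ⟨b, V⟩ hp ⟨b', V'⟩ hq heq
  rcases le_total V.length V'.length with h | h
  · exact key b b' V V' (by simpa using hp) (by simpa using hq) h heq
  · exact (key b' b V' V (by simpa using hq) (by simpa using hp) h heq.symm).symm

end CountProof

/-- The number of elements of word length exactly `2r+1` that are conjugates of a
power of `α` is `2·3^r`. -/
theorem card_C_alpha_odd (r : ℕ) : Nat.card (C α (2 * r + 1)) = 2 * 3 ^ r := by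
  rw [CountProof.C_eq r, Nat.card_coe_set_eq, Set.ncard_coe_finset,
    Finset.card_image_of_injOn (CountProof.fmap_injOn r)]
  rw [CountProof.D, Finset.card_product, Finset.card_univ]
  have hcard := CountProof.card_genF r CountProof.topA
  have htopA : CountProof.topA.card = 2 := by decide
  have hp : 1 ≤ 3 ^ r := Nat.one_le_pow _ _ (by norm_num)
  rw [htopA] at hcard
  simp only [Fintype.card_bool]
  omega
end

section
/- In the free group F₂ on α, β, for every nonnegative integer r, the number of elements of word length exactly 2r+2 that are conjugates of powers of α is 2·3^r. -/
open FreeGroup List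

abbrev Letter := Fin 2 × Bool
def IsRed (L : List Letter) : Prop := List.Chain' (fun a b => ¬(a.1 = b.1 ∧ a.2 = !b.2)) L
theorem reduce_eq_self_of_isRed : ∀ {L : List Letter}, IsRed L → FreeGroup.reduce L = L
  | [], _ => rfl
  | [x], _ => rfl
  | (x :: y :: t), h => by
    obtain ⟨hxy, h'⟩ := List.isChain_cons_cons.mp h
    have ih := reduce_eq_self_of_isRed h'
    rw [reduce.cons, ih]
    simp [hxy]

theorem isRed_of_reduce_eq_self : ∀ {L : List Letter}, FreeGroup.reduce L = L → IsRed L := by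
  intro L
  induction L with
  | nil => intro _; exact List.isChain_nil
  | cons a l ih =>
    intro h
    rw [reduce.cons] at h
    rcases hl : reduce l with _ | ⟨hd, tl⟩ <;> rw [hl] at h
    · simp only at h
      have : l = [] := by injection h with h1 h2; exact h2.symm
      subst this; exact List.isChain_singleton a
    · dsimp only at h
      by_cases c : a.1 = hd.1 ∧ a.2 = !hd.2
      · rw [if_pos c] at h
        exfalso
        have hle : (hd :: tl).length ≤ l.length := hl ▸ Red.length_le reduce.red
        have : tl.length + 1 ≤ l.length := by simpa using hle
        rw [h] at this; simp at this
      · rw [if_neg c] at h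
        have h2 : l = hd :: tl := by injection h with h1 h2; exact h2.symm
        have : reduce l = l := by rw [hl, h2]
        have hred := ih this
        subst h2; exact List.isChain_cons_cons.mpr ⟨c, hred⟩
theorem isRed_invRev {L : List Letter} (h : IsRed L) : IsRed (invRev L) := by
  unfold IsRed List.Chain' FreeGroup.invRev at *
  rw [List.isChain_reverse, List.isChain_map]
  exact h.imp (by rintro ⟨a, sa⟩ ⟨b, sb⟩ hab ⟨h1, h2⟩; exact hab ⟨h1.symm, by revert h2; cases sa <;> cases sb <;> simp⟩)

theorem isRed_reverse {L : List Letter} (h : IsRed L) : IsRed L.reverse := by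
  unfold IsRed List.Chain' at *
  rw [List.isChain_reverse]
  exact h.imp (by rintro ⟨a, sa⟩ ⟨b, sb⟩ hab ⟨h1, h2⟩; exact hab ⟨h1.symm, by revert h2; cases sa <;> cases sb <;> simp⟩)

theorem mk_replicate (m : ℕ) (ε : Bool) :
    FreeGroup.mk (List.replicate m ((0 : Fin 2), ε)) = α ^ (cond ε (m : ℤ) (-(m : ℤ))) := by
  cases ε
  · have h1 : FreeGroup.mk (List.replicate m ((0 : Fin 2), true)) = α ^ m := by
      apply FreeGroup.toWord_injective
      rw [FreeGroup.toWord_mk, FreeGroup.reduce_replicate, α, FreeGroup.toWord_of_pow]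
    have : FreeGroup.invRev (List.replicate m ((0:Fin 2), true)) = List.replicate m ((0:Fin 2), false) := by
      simp [FreeGroup.invRev, List.reverse_replicate]
    calc FreeGroup.mk (List.replicate m ((0 : Fin 2), false))
        = (FreeGroup.mk (List.replicate m ((0:Fin 2), true)))⁻¹ := by rw [FreeGroup.inv_mk, this]
      _ = (α ^ m)⁻¹ := by rw [h1]
      _ = α ^ (-(m:ℤ)) := by rw [zpow_neg, zpow_natCast]
  · apply FreeGroup.toWord_injective
    rw [FreeGroup.toWord_mk, FreeGroup.reduce_replicate]
    show _ = (α ^ ((m:ℤ))).toWord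
    rw [zpow_natCast, α, FreeGroup.toWord_of_pow]

theorem isRed_word {L : List Letter} (hL : IsRed L)
    (hend : ∀ p ∈ L.getLast?, p.1 ≠ 0) {m : ℕ} (hm : m ≠ 0) (ε : Bool) :
    IsRed (L ++ (List.replicate m ((0:Fin 2), ε) ++ invRev L)) := by
  unfold IsRed List.Chain'
  rw [List.isChain_append, List.isChain_append]
  refine ⟨hL, ⟨List.isChain_replicate_of_rel m (by simp), isRed_invRev hL, ?_⟩, ?_⟩
  · -- junction replicate / invRev
    intro x hx y hy
    have hx' : x = ((0:Fin 2), ε) := by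
      rw [List.getLast?_replicate, if_neg hm] at hx
      simpa using hx.symm
    have hy1 : y.1 ≠ 0 := by
      rw [FreeGroup.invRev, List.head?_reverse, List.getLast?_map] at hy
      obtain ⟨p, hp, rfl⟩ := Option.map_eq_some_iff.mp (Option.mem_def.mp hy)
      exact hend p hp
    subst hx'
    exact fun hc => hy1 hc.1.symm
  · -- junction L / middle
    intro x hx y hy
    have : y = ((0:Fin 2), ε) := by
      rw [List.head?_append, List.head?_replicate, if_neg hm] at hy
      simp at hy; exact hy.symm
    subst this
    exact fun hc => hend x hx hc.1

theorem word_eq (L : List Letter) (m : ℕ) (ε : Bool) :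
    FreeGroup.mk (L ++ (List.replicate m ((0:Fin 2), ε) ++ invRev L)) =
      FreeGroup.mk L * α ^ (cond ε (m : ℤ) (-(m : ℤ))) * (FreeGroup.mk L)⁻¹ := by
  rw [FreeGroup.inv_mk, ← mk_replicate, FreeGroup.mul_mk, FreeGroup.mul_mk, List.append_assoc]

theorem isRed_toWord (w : F2) : IsRed w.toWord :=
  isRed_of_reduce_eq_self (FreeGroup.reduce_toWord w)

theorem toWord_word {L : List Letter} (hL : IsRed L)
    (hend : ∀ p ∈ L.getLast?, p.1 ≠ 0) {m : ℕ} (hm : m ≠ 0) (ε : Bool) :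
    (FreeGroup.mk (L ++ (List.replicate m ((0:Fin 2), ε) ++ invRev L))).toWord =
      L ++ (List.replicate m ((0:Fin 2), ε) ++ invRev L) := by
  rw [FreeGroup.toWord_mk, reduce_eq_self_of_isRed (isRed_word hL hend hm ε)]

theorem norm_word {L : List Letter} (hL : IsRed L)
    (hend : ∀ p ∈ L.getLast?, p.1 ≠ 0) {m : ℕ} (hm : m ≠ 0) (ε : Bool) :
    (FreeGroup.mk (L ++ (List.replicate m ((0:Fin 2), ε) ++ invRev L))).norm =
      2 * L.length + m := by
  rw [FreeGroup.norm, toWord_word hL hend hm ε]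
  simp [FreeGroup.invRev_length]
  omega

theorem conj_pow_alpha (p : Letter) (hp : p.1 = 0) (k : ℤ) :
    FreeGroup.mk [p] * α ^ k * (FreeGroup.mk [p])⁻¹ = α ^ k := by
  obtain ⟨x, s⟩ := p
  simp only at hp; subst hp
  have key : ∀ e : ℤ, α ^ e * α ^ k * (α ^ e)⁻¹ = α ^ k := by
    intro e
    rw [← zpow_neg, ← zpow_add, ← zpow_add]
    congr 1; ring
  cases s
  · have : FreeGroup.mk [((0:Fin 2), false)] = α ^ (-1 : ℤ) := by
      rw [zpow_neg, zpow_one]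
      show _ = (FreeGroup.mk [((0:Fin 2), true)])⁻¹
      rw [FreeGroup.inv_mk]; rfl
    rw [this]; exact key _
  · have : FreeGroup.mk [((0:Fin 2), true)] = α ^ (1 : ℤ) := by rw [zpow_one]; rfl
    rw [this]; exact key _

theorem peel : ∀ n : ℕ, ∀ w : F2, w.norm ≤ n → ∀ k : ℤ, ∃ w₀ : F2,
    (∀ p ∈ w₀.toWord.getLast?, p.1 ≠ 0) ∧ w * α ^ k * w⁻¹ = w₀ * α ^ k * w₀⁻¹ := by
  intro n
  induction n with
  | zero =>
    intro w hw k
    have : w = 1 := FreeGroup.norm_eq_zero.mp (Nat.le_zero.mp hw)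
    subst this
    exact ⟨1, by simp [FreeGroup.toWord_one], rfl⟩
  | succ n ih =>
    intro w hw k
    rcases h : w.toWord.getLast? with _ | ⟨p⟩
    · exact ⟨w, by simp [h], rfl⟩
    by_cases hp : p.1 = 0
    · obtain ⟨L', hL'⟩ := List.getLast?_eq_some_iff.mp h
      have hred : IsRed w.toWord := isRed_toWord w
      have hredL' : IsRed L' := by
        rw [hL'] at hred; exact (List.isChain_append.mp hred).1
      have hw'word : (FreeGroup.mk L').toWord = L' := by
        rw [FreeGroup.toWord_mk, reduce_eq_self_of_isRed hredL']
      have hnorm : (FreeGroup.mk L').norm ≤ n := by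
        have h1 : (FreeGroup.mk L').norm = L'.length := by rw [FreeGroup.norm, hw'word]
        have h2 : w.norm = L'.length + 1 := by
          rw [FreeGroup.norm, hL']; simp
        omega
      have hsplit : w = FreeGroup.mk L' * FreeGroup.mk [p] := by
        rw [FreeGroup.mul_mk, ← hL', FreeGroup.mk_toWord]
      obtain ⟨w₀, hend₀, heq₀⟩ := ih (FreeGroup.mk L') hnorm k
      refine ⟨w₀, hend₀, ?_⟩
      rw [hsplit, ← heq₀, mul_inv_rev]
      have := conj_pow_alpha p hp k
      calc FreeGroup.mk L' * FreeGroup.mk [p] * α ^ k * ((FreeGroup.mk [p])⁻¹ * (FreeGroup.mk L')⁻¹)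
          = FreeGroup.mk L' * (FreeGroup.mk [p] * α ^ k * (FreeGroup.mk [p])⁻¹) * (FreeGroup.mk L')⁻¹ := by
            group
        _ = FreeGroup.mk L' * α ^ k * (FreeGroup.mk L')⁻¹ := by rw [this]
    · refine ⟨w, ?_, rfl⟩
      intro q hq
      rw [h] at hq
      have : q = p := by simpa using hq.symm
      rwa [this]
def HW (x : Letter) : ℕ → Finset (List Letter)
  | 0 => {[x]}
  | n+1 => (Finset.univ.filter fun y : Letter => ¬(x.1 = y.1 ∧ x.2 = !y.2)).biUnion
      fun y => (HW y n).image (x :: ·)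

theorem mem_HW : ∀ (n : ℕ) (x : Letter) (L : List Letter),
    L ∈ HW x n ↔ IsRed L ∧ L.length = n + 1 ∧ L.head? = some x := by
  intro n
  induction n with
  | zero =>
    intro x L
    simp only [HW, Finset.mem_singleton]
    constructor
    · rintro rfl
      exact ⟨List.isChain_singleton x, rfl, rfl⟩
    · rintro ⟨h1, h2, h3⟩
      match L, h2 with
      | [a], _ => have : a = x := by simpa using h3
                  rw [this]
  | succ n ih =>
    intro x L
    simp only [HW, Finset.mem_biUnion, Finset.mem_filter, Finset.mem_univ, true_and,
      Finset.mem_image]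
    constructor
    · rintro ⟨y, hy, M, hM, rfl⟩
      obtain ⟨hr, hlen, hhd⟩ := (ih y M).mp hM
      refine ⟨List.isChain_cons.mpr ⟨?_, hr⟩, by simp [hlen], rfl⟩
      intro z hz
      rw [hhd] at hz
      have : z = y := by simpa using hz.symm
      subst this; exact hy
    · rintro ⟨h1, h2, h3⟩
      match L with
      | a :: M =>
        have hax : a = x := by simpa using h3
        subst hax
        have hMlen : M.length = n + 1 := by simpa using h2
        obtain ⟨y, M', rfl⟩ : ∃ y M', M = y :: M' := by
          match M, hMlen with
          | y :: M', _ => exact ⟨y, M', rfl⟩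
        obtain ⟨hcond, hr⟩ := List.isChain_cons_cons.mp h1
        exact ⟨y, hcond, y :: M', (ih y _).mpr ⟨hr, hMlen, rfl⟩, rfl⟩

theorem card_HW : ∀ (n : ℕ) (x : Letter), (HW x n).card = 3 ^ n := by
  intro n
  induction n with
  | zero => intro x; simp [HW]
  | succ n ih =>
    intro x
    rw [HW, Finset.card_biUnion]
    · have h3 : ∀ x : Letter,
          (Finset.univ.filter fun y : Letter => ¬(x.1 = y.1 ∧ x.2 = !y.2)).card = 3 := by decide
      calc ∑ y ∈ Finset.univ.filter fun y : Letter => ¬(x.1 = y.1 ∧ x.2 = !y.2),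
            ((HW y n).image (x :: ·)).card
          = ∑ y ∈ Finset.univ.filter fun y : Letter => ¬(x.1 = y.1 ∧ x.2 = !y.2), 3 ^ n := by
            refine Finset.sum_congr rfl fun y _ => ?_
            rw [Finset.card_image_of_injective _ fun a b h => by injection h, ih]
        _ = 3 ^ (n + 1) := by rw [Finset.sum_const, h3, smul_eq_mul]; ring
    · intro y₁ _ y₂ _ hne
      refine Finset.disjoint_left.mpr fun L hL1 hL2 => hne ?_
      simp only [Finset.mem_image] at hL1 hL2
      obtain ⟨M₁, hM₁, rfl⟩ := hL1
      obtain ⟨M₂, hM₂, hEq⟩ := hL2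
      have e1 := ((mem_HW n y₁ M₁).mp hM₁).2.2
      have e2 := ((mem_HW n y₂ M₂).mp hM₂).2.2
      have : M₂ = M₁ := by injection hEq
      subst this
      rw [e1] at e2
      injection e2

def D : ℕ → Finset (List Letter)
  | 0 => {[]}
  | n+1 => HW ((1:Fin 2), true) n ∪ HW ((1:Fin 2), false) n

theorem mem_D : ∀ (ℓ : ℕ) (L : List Letter),
    L ∈ D ℓ ↔ IsRed L ∧ L.length = ℓ ∧ ∀ p ∈ L.head?, p.1 ≠ 0 := by
  intro ℓ L
  cases ℓ with
  | zero =>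
    simp only [D, Finset.mem_singleton]
    constructor
    · rintro rfl; exact ⟨List.isChain_nil, rfl, by simp⟩
    · rintro ⟨-, h2, -⟩; exact List.length_eq_zero_iff.mp h2
  | succ n =>
    simp only [D, Finset.mem_union, mem_HW]
    constructor
    · rintro (⟨h1, h2, h3⟩ | ⟨h1, h2, h3⟩) <;>
        exact ⟨h1, h2, by intro p hp; rw [h3] at hp; simp at hp; subst hp; simp⟩
    · rintro ⟨h1, h2, h3⟩
      match L with
      | a :: M =>
        have ha : a.1 ≠ 0 := h3 a rfl
        have ha1 : a.1 = 1 := by omega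
        obtain ⟨a1, a2⟩ := a
        simp only at ha1; subst ha1
        cases a2
        · right; exact ⟨h1, h2, rfl⟩
        · left; exact ⟨h1, h2, rfl⟩

theorem card_D (ℓ : ℕ) : (D ℓ).card = if ℓ = 0 then 1 else 2 * 3 ^ (ℓ - 1) := by
  cases ℓ with
  | zero => simp [D]
  | succ n =>
    rw [D, Finset.card_union_of_disjoint, card_HW, card_HW]
    · simp; ring
    · refine Finset.disjoint_left.mpr fun L h1 h2 => ?_
      have e1 := ((mem_HW n _ L).mp h1).2.2
      have e2 := ((mem_HW n _ L).mp h2).2.2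
      rw [e1] at e2
      simp at e2

theorem sum_card_D (r : ℕ) : ∑ ℓ ∈ Finset.range (r + 1), (D ℓ).card = 3 ^ r := by
  induction r with
  | zero => simp [card_D]
  | succ r ih =>
    rw [Finset.sum_range_succ, ih, card_D]
    simp only [Nat.succ_ne_zero, if_false]
    simp
    ring

noncomputable def σ : F2 →* Multiplicative ℤ :=
  FreeGroup.lift fun i => Multiplicative.ofAdd (if i = 0 then (1 : ℤ) else 0)

theorem σ_conj (w : F2) (k : ℤ) : σ (w * α ^ k * w⁻¹) = Multiplicative.ofAdd k := by
  have hα : σ α = Multiplicative.ofAdd (1 : ℤ) := by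
    rw [α, σ, FreeGroup.lift_apply_of, if_pos rfl]
  rw [MonoidHom.map_mul, MonoidHom.map_mul, MonoidHom.map_zpow, MonoidHom.map_inv, hα, mul_comm (σ w) _, mul_assoc, mul_inv_cancel,
    mul_one]
  rw [← Multiplicative.toAdd.apply_eq_iff_eq]
  simp

def base (r : ℕ) : Finset (Bool × List Letter) :=
  Finset.univ ×ˢ (Finset.range (r + 1)).biUnion D

theorem card_base (r : ℕ) : (base r).card = 2 * 3 ^ r := by
  rw [base, Finset.card_product, Finset.card_biUnion, sum_card_D]
  · simp
  · intro ℓ₁ _ ℓ₂ _ hne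
    refine Finset.disjoint_left.mpr fun L h1 h2 => hne ?_
    have e1 := ((mem_D ℓ₁ L).mp h1).2.1
    have e2 := ((mem_D ℓ₂ L).mp h2).2.1
    omega

def φ (r : ℕ) (p : Bool × List Letter) : F2 :=
  FreeGroup.mk (p.2.reverse ++ (List.replicate (2 * r + 2 - 2 * p.2.length) ((0:Fin 2), p.1)
    ++ FreeGroup.invRev p.2.reverse))

theorem base_props {r : ℕ} {ε : Bool} {M : List Letter} (h : (ε, M) ∈ base r) :
    IsRed M.reverse ∧ (∀ p ∈ M.reverse.getLast?, p.1 ≠ 0) ∧ M.length ≤ r := by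
  rw [base, Finset.mem_product] at h
  obtain ⟨-, h⟩ := h
  simp only [Finset.mem_biUnion, Finset.mem_range] at h
  obtain ⟨ℓ, hℓ, hM⟩ := h
  obtain ⟨h1, h2, h3⟩ := (mem_D ℓ M).mp hM
  exact ⟨isRed_reverse h1, by rw [List.getLast?_reverse]; exact h3, by omega⟩

theorem phi_mem (r : ℕ) {ε : Bool} {M : List Letter} (h : (ε, M) ∈ base r) :
    φ r (ε, M) ∈ C α (2 * r + 2) := by
  obtain ⟨h1, h2, h3⟩ := base_props h
  have hm : 2 * r + 2 - 2 * M.length ≠ 0 := by omega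
  constructor
  · rw [φ]
    have := norm_word h1 h2 hm ε
    simp only [List.length_reverse] at this ⊢
    rw [this]
    omega
  · exact ⟨FreeGroup.mk M.reverse, cond ε ((2 * r + 2 - 2 * M.length : ℕ) : ℤ)
      (-((2 * r + 2 - 2 * M.length : ℕ) : ℤ)), (word_eq M.reverse _ ε).symm ▸ by rw [φ, word_eq]⟩

theorem σ_phi (r : ℕ) {ε : Bool} {M : List Letter} (h : (ε, M) ∈ base r) :
    σ (φ r (ε, M)) = Multiplicative.ofAdd
      (cond ε ((2 * r + 2 - 2 * M.length : ℕ) : ℤ) (-((2 * r + 2 - 2 * M.length : ℕ) : ℤ))) := by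
  rw [φ, word_eq, σ_conj]

theorem phi_injOn (r : ℕ) : Set.InjOn (φ r) (base r) := by
  rintro ⟨ε₁, M₁⟩ h₁ ⟨ε₂, M₂⟩ h₂ heq
  have hσ := (σ_phi r h₁).symm.trans ((congrArg σ heq).trans (σ_phi r h₂))
  have hk : (cond ε₁ ((2 * r + 2 - 2 * M₁.length : ℕ) : ℤ) (-((2 * r + 2 - 2 * M₁.length : ℕ) : ℤ)))
      = (cond ε₂ ((2 * r + 2 - 2 * M₂.length : ℕ) : ℤ) (-((2 * r + 2 - 2 * M₂.length : ℕ) : ℤ))) := by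
    exact_mod_cast Multiplicative.ofAdd.injective hσ
  obtain ⟨-, -, hr₁⟩ := base_props h₁
  obtain ⟨-, -, hr₂⟩ := base_props h₂
  have hm₁ : (0:ℤ) < ((2 * r + 2 - 2 * M₁.length : ℕ) : ℤ) := by
    have : 2 * r + 2 - 2 * M₁.length ≠ 0 := by omega
    exact_mod_cast Nat.pos_of_ne_zero this
  have hm₂ : (0:ℤ) < ((2 * r + 2 - 2 * M₂.length : ℕ) : ℤ) := by
    have : 2 * r + 2 - 2 * M₂.length ≠ 0 := by omega
    exact_mod_cast Nat.pos_of_ne_zero this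
  have hε : ε₁ = ε₂ := by
    cases ε₁ <;> cases ε₂ <;> simp_all <;> omega
  subst hε
  have hlen : M₁.length = M₂.length := by
    cases ε₁ <;> simp at hk <;> omega
  -- now compare words
  obtain ⟨hr1, he1, _⟩ := base_props h₁
  obtain ⟨hr2, he2, _⟩ := base_props h₂
  have hm1' : 2 * r + 2 - 2 * M₁.length ≠ 0 := by omega
  have hm2' : 2 * r + 2 - 2 * M₂.length ≠ 0 := by omega
  have hw := congrArg FreeGroup.toWord heq
  rw [φ, φ] at hw
  have t1 := toWord_word hr1 he1 hm1' ε₁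
  have t2 := toWord_word hr2 he2 hm2' ε₁
  rw [t1, t2] at hw
  have : M₁.reverse = M₂.reverse :=
    List.append_inj_left hw (by simp [hlen])
  have : M₁ = M₂ := by
    have := congrArg List.reverse this
    simpa using this
  simp [this]

theorem C_eq (r : ℕ) : C α (2 * r + 2) = ↑((base r).image (φ r)) := by
  ext g
  simp only [Finset.coe_image, Set.mem_image, Finset.mem_coe]
  constructor
  · rintro ⟨hn, w, k, rfl⟩
    have hk : k ≠ 0 := by
      rintro rfl
      rw [zpow_zero, mul_one, mul_inv_cancel] at hn
      rw [FreeGroup.norm_one] at hn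
      omega
    obtain ⟨w₀, hend, heq⟩ := peel w.norm w le_rfl k
    rw [heq]
    set L := w₀.toWord with hLdef
    have hL : IsRed L := isRed_toWord w₀
    set m := k.natAbs with hmdef
    set ε := decide (0 < k) with hεdef
    have hm : m ≠ 0 := Int.natAbs_ne_zero.mpr hk
    have hc : (cond ε (m:ℤ) (-(m:ℤ))) = k := by
      rcases hk.lt_or_gt with hneg | hpos
      · have hε : ε = false := by simp [hεdef]; omega
        rw [hε]
        simp only [cond_false, hmdef, Int.natCast_natAbs]
        rw [abs_of_neg hneg]; ring
      · have hε : ε = true := by simp [hεdef]; omega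
        rw [hε]
        simp only [cond_true, hmdef, Int.natCast_natAbs]
        exact abs_of_pos hpos
    have hgw : w₀ * α ^ k * w₀⁻¹
        = FreeGroup.mk (L ++ (List.replicate m ((0:Fin 2), ε) ++ FreeGroup.invRev L)) := by
      rw [word_eq, hc, FreeGroup.mk_toWord]
    have hnorm : 2 * L.length + m = 2 * r + 2 := by
      rw [heq, hgw, norm_word hL hend hm ε] at hn
      exact hn
    refine ⟨(ε, L.reverse), ?_, ?_⟩
    · rw [base, Finset.mem_product]
      refine ⟨Finset.mem_univ _, ?_⟩
      simp only [Finset.mem_biUnion, Finset.mem_range]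
      refine ⟨L.length, by omega, (mem_D _ _).mpr ⟨isRed_reverse hL, by simp, ?_⟩⟩
      rw [List.head?_reverse]
      exact hend
    · rw [φ, hgw]
      simp only [List.reverse_reverse, List.length_reverse]
      rw [show 2 * r + 2 - 2 * L.length = m from by omega]
  · rintro ⟨⟨ε, M⟩, hmem, rfl⟩
    exact phi_mem r (Finset.mem_coe.mp hmem)

/-- The number of elements of word length exactly `2r+2` that are conjugates of a
power of `α` is `2·3^r`. -/
theorem card_C_alpha_even (r : ℕ) : Nat.card (C α (2 * r + 2)) = 2 * 3 ^ r := by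
  rw [C_eq r, Nat.card_coe_set_eq, Set.ncard_coe_finset,
    Finset.card_image_of_injOn (phi_injOn r), card_base]
end

section
/- In the free group F₂ on α, β, for every nonnegative integer r, the number of elements of word length exactly 2r+2 of the form w·(αβ)ᵏ·w⁻¹ (for some w ∈ F₂ and integer k) is 4·3^r. -/
/-! ### Auxiliary development -/

abbrev Ltr := Fin 2 × Bool

def bar (x : Ltr) : Ltr := (x.1, !x.2)

@[simp] lemma bar_bar (x : Ltr) : bar (bar x) = x := by simp [bar]

lemma bar_eq_iff {x y : Ltr} : x = bar y ↔ y = bar x := by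
  constructor <;> rintro rfl <;> simp

/-- A word is reduced. -/
def Rd (l : List Ltr) : Prop := l.IsChain fun p q => p ≠ bar q

lemma Rd.tail' {x : Ltr} {t : List Ltr} (h : Rd (x :: t)) : Rd t :=
  (List.isChain_cons.mp h).2

lemma reduce_eq_self {l : List Ltr} (h : Rd l) : FreeGroup.reduce l = l := by
  induction l with
  | nil => rfl
  | cons x t ih =>
    rw [FreeGroup.reduce.cons, ih h.tail']
    cases t with
    | nil => rfl
    | cons y t' =>
      have hxy : x ≠ bar y := (List.isChain_cons_cons.mp h).1
      have h2 : ¬ (x.1 = y.1 ∧ x.2 = !y.2) := by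
        rintro ⟨h1, h2⟩
        exact hxy (Prod.ext h1 h2)
      simp only [h2, if_false]

lemma toWord_mk_of_rd {l : List Ltr} (h : Rd l) : (FreeGroup.mk l).toWord = l := by
  rw [FreeGroup.toWord_mk, reduce_eq_self h]

lemma norm_mk_of_rd {l : List Ltr} (h : Rd l) : (FreeGroup.mk l).norm = l.length := by
  rw [FreeGroup.norm, toWord_mk_of_rd h]

@[simp] lemma invRev_cons {x : Ltr} {l : List Ltr} :
    FreeGroup.invRev (x :: l) = FreeGroup.invRev l ++ [bar x] := by
  simp [FreeGroup.invRev, bar]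

@[simp] lemma invRev_nil : FreeGroup.invRev ([] : List Ltr) = [] := rfl

lemma head?_invRev {l : List Ltr} : (FreeGroup.invRev l).head?  = l.getLast?.map bar := by
  simp [FreeGroup.invRev, List.head?_reverse, bar]
  rfl

lemma getLast?_invRev {l : List Ltr} : (FreeGroup.invRev l).getLast? = l.head?.map bar := by
  simp [FreeGroup.invRev, List.getLast?_reverse, bar]
  rfl

lemma Rd.invRev {l : List Ltr} (h : Rd l) : Rd (FreeGroup.invRev l) := by
  rw [Rd, FreeGroup.invRev, List.isChain_reverse]
  rw [List.isChain_map]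
  refine h.imp fun a b hab => ?_
  show bar b ≠ bar (bar a)
  rw [bar_bar]
  exact fun hc => hab hc.symm

lemma Rd.rev {l : List Ltr} (h : Rd l) : Rd l.reverse := by
  rw [Rd, List.isChain_reverse]
  refine h.imp fun a b hab => ?_
  exact fun hc => hab (bar_eq_iff.mp hc)

/-! ### Core words -/

def pairL (t : Bool) : List Ltr :=
  if t then [((0 : Fin 2), true), ((1 : Fin 2), true)]
  else [((1 : Fin 2), true), ((0 : Fin 2), true)]

def pcw (t : Bool) (k : ℕ) : List Ltr := (List.replicate k (pairL t)).flatten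

def cw (t s : Bool) (k : ℕ) : List Ltr := if s then pcw t k else FreeGroup.invRev (pcw t k)

def firstL (t s : Bool) : Ltr :=
  match t, s with
  | true, true => ((0 : Fin 2), true)
  | false, true => ((1 : Fin 2), true)
  | true, false => ((1 : Fin 2), false)
  | false, false => ((0 : Fin 2), false)

def lastL (t s : Bool) : Ltr :=
  match t, s with
  | true, true => ((1 : Fin 2), true)
  | false, true => ((0 : Fin 2), true)
  | true, false => ((0 : Fin 2), false)
  | false, false => ((1 : Fin 2), false)

lemma pairL_ne_nil (t : Bool) : pairL t ≠ [] := by cases t <;> simp [pairL]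

lemma pcw_succ (t : Bool) (k : ℕ) : pcw t (k + 1) = pairL t ++ pcw t k := by
  simp [pcw, List.replicate_succ]

lemma pcw_succ' (t : Bool) (k : ℕ) : pcw t (k + 1) = pcw t k ++ pairL t := by
  simp [pcw, List.replicate_succ']

lemma pcw_length (t : Bool) (k : ℕ) : (pcw t k).length = 2 * k := by
  induction k with
  | zero => simp [pcw]
  | succ n ih =>
    rw [pcw_succ, List.length_append, ih]
    cases t <;> simp [pairL] <;> ring

lemma cw_length (t s : Bool) (k : ℕ) : (cw t s k).length = 2 * k := by
  cases s <;> simp [cw, FreeGroup.invRev, pcw_length]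

lemma pcw_head {t : Bool} {k : ℕ} (hk : k ≠ 0) : (pcw t k).head? = some (firstL t true) := by
  obtain ⟨n, rfl⟩ := Nat.exists_eq_succ_of_ne_zero hk
  rw [pcw_succ, List.head?_append_of_ne_nil _ (pairL_ne_nil t)]
  cases t <;> rfl

lemma pcw_last {t : Bool} {k : ℕ} (hk : k ≠ 0) : (pcw t k).getLast? = some (lastL t true) := by
  obtain ⟨n, rfl⟩ := Nat.exists_eq_succ_of_ne_zero hk
  rw [pcw_succ', List.getLast?_append_of_ne_nil _ (pairL_ne_nil t)]
  cases t <;> rfl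

lemma cw_head {t s : Bool} {k : ℕ} (hk : k ≠ 0) : (cw t s k).head? = some (firstL t s) := by
  cases s
  · rw [cw, if_neg (by simp), head?_invRev, pcw_last hk]
    cases t <;> rfl
  · rw [cw, if_pos rfl, pcw_head hk]

lemma cw_last {t s : Bool} {k : ℕ} (hk : k ≠ 0) : (cw t s k).getLast? = some (lastL t s) := by
  cases s
  · rw [cw, if_neg (by simp), getLast?_invRev, pcw_head hk]
    cases t <;> rfl
  · rw [cw, if_pos rfl, pcw_last hk]

lemma Rd_pcw (t : Bool) (k : ℕ) : Rd (pcw t k) := by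
  induction k with
  | zero => simp [pcw, Rd]
  | succ n ih =>
    rw [pcw_succ, Rd, List.isChain_append]
    refine ⟨by cases t <;> exact List.isChain_pair.mpr (by decide), ih, ?_⟩
    intro x hx y hy
    rcases Nat.eq_zero_or_pos n with rfl | hn
    · simp [pcw] at hy
    · rw [pcw_head hn.ne'] at hy
      simp only [Option.mem_def, Option.some.injEq] at hy
      subst hy
      cases t <;> simp only [pairL, Bool.false_eq_true, if_true, if_false,
        List.getLast?_cons_cons, List.getLast?_singleton, Option.mem_def,
        Option.some.injEq] at hx <;> subst hx <;> decide

lemma Rd_cw (t s : Bool) (k : ℕ) : Rd (cw t s k) := by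
  cases s
  · exact (Rd_pcw t k).invRev
  · exact Rd_pcw t k

/-! ### The normal form `W` -/

def W (u : List Ltr) (t s : Bool) (k : ℕ) : List Ltr := u ++ cw t s k ++ FreeGroup.invRev u

def forb (t : Bool) : List Ltr :=
  if t then [((0 : Fin 2), false), ((1 : Fin 2), true)]
  else [((0 : Fin 2), true), ((1 : Fin 2), false)]

def Good (u : List Ltr) (t : Bool) (k : ℕ) : Prop :=
  Rd u ∧ 1 ≤ k ∧ ∀ x ∈ u.getLast?, x ∉ forb t

lemma bar_firstL_mem_forb (t s : Bool) : bar (firstL t s) ∈ forb t := by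
  cases t <;> cases s <;> decide

lemma lastL_mem_forb (t s : Bool) : lastL t s ∈ forb t := by
  cases t <;> cases s <;> decide

lemma lastL_ne_bar_firstL (t s : Bool) : lastL t s ≠ bar (firstL t s) := by
  cases t <;> cases s <;> decide

lemma cw_ne_nil {t s : Bool} {k : ℕ} (hk : k ≠ 0) : cw t s k ≠ [] := by
  intro h
  have h2 := cw_length t s k
  rw [h] at h2
  simp at h2
  omega

lemma W_nil (t s : Bool) (k : ℕ) : W [] t s k = cw t s k := by simp [W]

lemma W_cons (x : Ltr) (v : List Ltr) (t s : Bool) (k : ℕ) :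
    W (x :: v) t s k = x :: (W v t s k ++ [bar x]) := by
  simp [W, invRev_cons]

lemma rd_W {u : List Ltr} {t s : Bool} {k : ℕ} (h : Good u t k) : Rd (W u t s k) := by
  obtain ⟨hu, hk, hlast⟩ := h
  rw [W, List.append_assoc, Rd, List.isChain_append]
  refine ⟨hu, ?_, ?_⟩
  · rw [List.isChain_append]
    refine ⟨Rd_cw t s k, hu.invRev, ?_⟩
    intro x hx y hy
    rw [cw_last (by omega)] at hx
    rw [head?_invRev] at hy
    obtain ⟨z, hz, rfl⟩ := Option.mem_map.mp hy
    rw [Option.mem_def, Option.some.injEq] at hx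
    subst hx
    intro hc
    rw [bar_bar] at hc
    exact hlast z hz (hc ▸ lastL_mem_forb t s)
  · intro x hx y hy
    rw [List.head?_append_of_ne_nil _ (cw_ne_nil (by omega)), cw_head (by omega)] at hy
    rw [Option.mem_def, Option.some.injEq] at hy
    subst hy
    intro hc
    exact hlast x hx (hc ▸ bar_firstL_mem_forb t s)

/-! ### Group-level facts -/

def pr (t : Bool) : F2 := if t then α * β else β * α

lemma mk_tt (i : Fin 2) : FreeGroup.mk [(i, true)] = FreeGroup.of i := rfl

lemma mk_ff (i : Fin 2) : FreeGroup.mk [(i, false)] = (FreeGroup.of i)⁻¹ := by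
  rw [← mk_tt, FreeGroup.inv_mk]
  simp [FreeGroup.invRev]

lemma mk_bar (x : Ltr) : FreeGroup.mk [bar x] = (FreeGroup.mk [x])⁻¹ := by
  rw [FreeGroup.inv_mk]
  simp [FreeGroup.invRev, bar]

lemma mk_pairL (t : Bool) : FreeGroup.mk (pairL t) = pr t := by
  cases t <;> simp [pairL, pr, α, β, ← mk_tt, ← FreeGroup.mul_mk] <;> rfl

lemma mk_pcw (t : Bool) (k : ℕ) : FreeGroup.mk (pcw t k) = pr t ^ k := by
  induction k with
  | zero => rfl
  | succ n ih => rw [pcw_succ, ← FreeGroup.mul_mk, ih, mk_pairL, pow_succ']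

lemma mk_cw_true (t : Bool) (k : ℕ) : FreeGroup.mk (cw t true k) = pr t ^ k := by
  rw [cw, if_pos rfl, mk_pcw]

lemma mk_cw_false (t : Bool) (k : ℕ) : FreeGroup.mk (cw t false k) = (pr t ^ k)⁻¹ := by
  rw [cw, if_neg (by simp), ← FreeGroup.inv_mk, mk_pcw]

lemma mk_W (u : List Ltr) (t s : Bool) (k : ℕ) :
    FreeGroup.mk (W u t s k) =
      FreeGroup.mk u * FreeGroup.mk (cw t s k) * (FreeGroup.mk u)⁻¹ := by
  rw [W, ← FreeGroup.mul_mk, ← FreeGroup.mul_mk, FreeGroup.inv_mk]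

lemma norm_W {u : List Ltr} {t s : Bool} {k : ℕ} (h : Good u t k) :
    (FreeGroup.mk (W u t s k)).norm = 2 * u.length + 2 * k := by
  rw [norm_mk_of_rd (rd_W h)]
  simp only [W, List.length_append, cw_length, FreeGroup.invRev_length]
  ring

/-! ### The set S of all conjugates of powers of αβ -/

def S : Set F2 :=
  {g | g = 1 ∨ ∃ u t s k, Good u t k ∧ g = FreeGroup.mk (W u t s k)}

lemma conj_pr {x : Ltr} {t : Bool} (hx : x ∈ forb t) :
    FreeGroup.mk [x] * pr t * (FreeGroup.mk [x])⁻¹ = pr (!t) := by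
  cases t <;> simp only [forb, if_pos, if_neg, List.mem_cons, List.mem_singleton,
    List.not_mem_nil, or_false, Bool.false_eq_true, if_false, if_true] at hx <;>
    rcases hx with rfl | rfl <;>
    simp only [pr, mk_tt, mk_ff, Bool.not_true, Bool.not_false, if_true, if_false,
      Bool.false_eq_true, α, β] <;> group

lemma conj_core {x : Ltr} {t : Bool} (s : Bool) (k : ℕ) (hx : x ∈ forb t) :
    FreeGroup.mk [x] * FreeGroup.mk (cw t s k) * (FreeGroup.mk [x])⁻¹ =
      FreeGroup.mk (cw (!t) s k) := by
  have hp : FreeGroup.mk [x] * pr t ^ k * (FreeGroup.mk [x])⁻¹ = pr (!t) ^ k := by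
    rw [← conj_pr hx, conj_pow]
  cases s
  · rw [mk_cw_false, mk_cw_false, ← hp]
    group
  · rw [mk_cw_true, mk_cw_true, hp]

lemma conj_letter_mem_S (x : Ltr) {g : F2} (hg : g ∈ S) :
    FreeGroup.mk [x] * g * (FreeGroup.mk [x])⁻¹ ∈ S := by
  rcases hg with rfl | ⟨u, t, s, k, ⟨hu, hk, hlast⟩, rfl⟩
  · left; rw [mul_one, mul_inv_cancel]
  · cases u with
    | nil =>
      by_cases hx : x ∈ forb t
      · right
        refine ⟨[], !t, s, k, ⟨List.isChain_nil, hk, by simp⟩, ?_⟩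
        rw [W_nil, W_nil, conj_core s k hx]
      · right
        refine ⟨[x], t, s, k, ⟨List.isChain_singleton x, hk, ?_⟩, ?_⟩
        · intro z hz
          simp only [List.getLast?_singleton, Option.mem_def, Option.some.injEq] at hz
          subst hz; exact hx
        · rw [W_nil, mk_W]
      | cons y v =>
      by_cases hxy : x = bar y
      · right
        refine ⟨v, t, s, k, ⟨hu.tail', hk, ?_⟩, ?_⟩
        · intro z hz
          apply hlast
          cases v with
          | nil => simp at hz
          | cons w v' => rwa [List.getLast?_cons_cons]
        · subst hxy
          rw [mk_W, mk_W, mk_bar]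
          have : FreeGroup.mk (y :: v) = FreeGroup.mk [y] * FreeGroup.mk v := by
            rw [FreeGroup.mul_mk]; rfl
          rw [this]
          group
      · right
        refine ⟨x :: y :: v, t, s, k, ⟨List.isChain_cons_cons.mpr ⟨hxy, hu⟩, hk, ?_⟩, ?_⟩
        · intro z hz
          apply hlast
          rwa [List.getLast?_cons_cons] at hz
        · rw [mk_W, mk_W]
          have : FreeGroup.mk (x :: y :: v) = FreeGroup.mk [x] * FreeGroup.mk (y :: v) := by
            rw [FreeGroup.mul_mk]; rfl
          rw [this]
          group

lemma conj_mem_S (w : F2) : ∀ g ∈ S, w * g * w⁻¹ ∈ S := by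
  induction w using FreeGroup.induction_on with
  | C1 => intro g hg; simpa
  | of i =>
    intro g hg
    have h : (FreeGroup.of i : F2) = FreeGroup.mk [(i, true)] := rfl
    rw [h]
    exact conj_letter_mem_S _ hg
  | inv_of i _ =>
    intro g hg
    have h : (FreeGroup.of i : F2)⁻¹ = FreeGroup.mk [(i, false)] := by
      rw [mk_ff]
    rw [h]
    exact conj_letter_mem_S _ hg
  | mul a b ha hb =>
    intro g hg
    have h : a * b * g * (a * b)⁻¹ = a * (b * g * b⁻¹) * a⁻¹ := by group
    rw [h]
    exact ha _ (hb _ hg)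

lemma zpow_mem_S (k : ℤ) : (α * β) ^ k ∈ S := by
  rcases k with n | n
  · cases n with
    | zero => left; simp
    | succ m =>
      right
      refine ⟨[], true, true, m + 1, ⟨List.isChain_nil, by omega, by simp⟩, ?_⟩
      rw [W_nil, mk_cw_true]
      simp only [pr, if_true]
      norm_cast
  · right
    refine ⟨[], true, false, n + 1, ⟨List.isChain_nil, by omega, by simp⟩, ?_⟩
    rw [W_nil, mk_cw_false, zpow_negSucc]
    simp [pr]

/-! ### Uniqueness of the normal form -/

lemma Good.tail {x : Ltr} {v : List Ltr} {t : Bool} {k : ℕ} (h : Good (x :: v) t k) :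
    Good v t k := by
  refine ⟨h.1.tail', h.2.1, fun z hz => h.2.2 z ?_⟩
  cases v with
  | nil => simp at hz
  | cons w v' => rwa [List.getLast?_cons_cons]

lemma firstL_inj {t s t' s' : Bool} (h : firstL t s = firstL t' s') : t = t' ∧ s = s' := by
  revert h
  cases t <;> cases s <;> cases t' <;> cases s' <;> decide

lemma W_cons_last (x : Ltr) (v : List Ltr) (t s : Bool) (k : ℕ) :
    (W (x :: v) t s k).getLast? = some (bar x) := by
  rw [W_cons]
  show ((x :: W v t s k) ++ [bar x]).getLast? = some (bar x)
  rw [List.getLast?_append_of_ne_nil _ (by simp)]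
  rfl

lemma W_injective : ∀ (u u' : List Ltr) (t t' s s' : Bool) (k k' : ℕ),
    Good u t k → Good u' t' k' → W u t s k = W u' t' s' k' →
    u = u' ∧ t = t' ∧ s = s' ∧ k = k' := by
  have key : ∀ (t t' s s' : Bool) (k k' : ℕ) (y : Ltr) (v' : List Ltr),
      k ≠ 0 → cw t s k = W (y :: v') t' s' k' → False := by
    intro t t' s s' k k' y v' hk hW
    have h1 : (cw t s k).head? = some y := by rw [hW, W_cons]; rfl
    have h2 : (cw t s k).getLast? = some (bar y) := by rw [hW, W_cons_last]
    rw [cw_head hk] at h1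
    rw [cw_last hk] at h2
    apply lastL_ne_bar_firstL t s
    rw [Option.some.injEq] at h1 h2
    rw [h2, ← h1]
  intro u
  induction u with
  | nil =>
    intro u' t t' s s' k k' hg hg' hW
    cases u' with
    | nil =>
      rw [W_nil, W_nil] at hW
      have hk : k ≠ 0 := by have := hg.2.1; omega
      have hk' : k' ≠ 0 := by have := hg'.2.1; omega
      have h1 : firstL t s = firstL t' s' := by
        have := cw_head (t := t) (s := s) hk
        rw [hW, cw_head hk'] at this
        exact (Option.some.injEq _ _ ▸ this).symm
      have h2 := firstL_inj h1
      have h3 : k = k' := by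
        have := cw_length t s k
        rw [hW, cw_length] at this
        omega
      exact ⟨rfl, h2.1, h2.2, h3⟩
    | cons y v' =>
      rw [W_nil] at hW
      exact absurd hW (fun h => key _ _ _ _ _ _ _ _ (by have := hg.2.1; omega) h)
  | cons x v ih =>
    intro u' t t' s s' k k' hg hg' hW
    cases u' with
    | nil =>
      rw [W_nil] at hW
      exact absurd hW.symm (fun h => key _ _ _ _ _ _ _ _ (by have := hg'.2.1; omega) h)
    | cons y v' =>
      rw [W_cons, W_cons] at hW
      obtain ⟨rfl, hW2⟩ := List.cons_eq_cons.mp hW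
      obtain ⟨hW3, -⟩ := List.append_inj' hW2 rfl
      obtain ⟨rfl, rfl, rfl, rfl⟩ := ih v' t t' s s' k k' hg.tail hg'.tail hW3
      exact ⟨rfl, rfl, rfl, rfl⟩

/-! ### Counting reduced words -/

def RW : ℕ → Ltr → Finset (List Ltr)
  | 0, x => {[x]}
  | n + 1, x =>
    (Finset.univ.filter fun y => x ≠ bar y).biUnion fun y => (RW n y).image (x :: ·)

lemma mem_RW : ∀ (n : ℕ) (x : Ltr) (l : List Ltr),
    l ∈ RW n x ↔ Rd l ∧ l.length = n + 1 ∧ l.head? = some x := by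
  intro n
  induction n with
  | zero =>
    intro x l
    simp only [RW, Finset.mem_singleton]
    constructor
    · rintro rfl
      exact ⟨List.isChain_singleton x, rfl, rfl⟩
    · rintro ⟨h1, h2, h3⟩
      obtain ⟨z, rfl⟩ := List.length_eq_one_iff.mp h2
      simp only [List.head?_cons, Option.some.injEq] at h3
      rw [h3]
  | succ n ih =>
    intro x l
    simp only [RW, Finset.mem_biUnion, Finset.mem_filter, Finset.mem_univ, true_and,
      Finset.mem_image]
    constructor
    · rintro ⟨y, hxy, m, hm, rfl⟩
      obtain ⟨hRd, hlen, hhead⟩ := (ih y m).mp hm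
      refine ⟨List.isChain_cons.mpr ⟨?_, hRd⟩, by simp [hlen], rfl⟩
      intro h hh
      rw [hhead] at hh
      rw [Option.mem_def, Option.some.injEq] at hh
      subst hh
      exact hxy
    · rintro ⟨hRd, hlen, hhead⟩
      cases l with
      | nil => simp at hhead
      | cons z m =>
        simp only [List.head?_cons, Option.some.injEq] at hhead
        subst hhead
        cases m with
        | nil => simp at hlen
        | cons w m' =>
          refine ⟨w, (List.isChain_cons_cons.mp hRd).1, w :: m', ?_, rfl⟩
          exact (ih w _).mpr ⟨hRd.tail', by simpa using hlen, rfl⟩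

lemma card_RW : ∀ (n : ℕ) (x : Ltr), (RW n x).card = 3 ^ n := by
  intro n
  induction n with
  | zero => intro x; simp [RW]
  | succ n ih =>
    intro x
    rw [RW, Finset.card_biUnion]
    · have hi : ∀ y, ((RW n y).image (x :: ·)).card = 3 ^ n := by
        intro y
        rw [Finset.card_image_of_injective _ (List.cons_injective), ih]
      rw [Finset.sum_congr rfl fun y _ => hi y, Finset.sum_const, smul_eq_mul]
      have hc : (Finset.univ.filter fun y => x ≠ bar y).card = 3 := by
        have he : (Finset.univ.filter fun y => x ≠ bar y) =
            Finset.univ.erase (bar x) := by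
          rw [← Finset.filter_ne']
          apply Finset.filter_congr
          intro y _
          simp only [ne_eq, eq_iff_iff]
          rw [not_iff_not]
          exact bar_eq_iff
        rw [he, Finset.card_erase_of_mem (Finset.mem_univ _), Finset.card_univ]
        rfl
      rw [hc]
      ring
    · intro y _ y' _ hne
      rw [Function.onFun, Finset.disjoint_left]
      rintro l hl hl'
      obtain ⟨m, hm, rfl⟩ := Finset.mem_image.mp hl
      obtain ⟨m', hm', he⟩ := Finset.mem_image.mp hl'
      obtain ⟨-, he2⟩ := List.cons_eq_cons.mp he
      have h1 := ((mem_RW n y m).mp hm).2.2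
      have h2 := ((mem_RW n y' m').mp hm').2.2
      rw [he2, h1] at h2
      rw [Option.some.injEq] at h2
      exact hne h2

def alw (t : Bool) : Finset Ltr := Finset.univ.filter fun x => x ∉ forb t

def AllU (t : Bool) (r : ℕ) : Finset (List Ltr) :=
  insert [] ((Finset.range r).biUnion fun m => (alw t).biUnion fun x => RW m x)

lemma mem_AllU {t : Bool} {r : ℕ} {v : List Ltr} :
    v ∈ AllU t r ↔ Rd v ∧ v.length ≤ r ∧ ∀ x ∈ v.head?, x ∉ forb t := by
  simp only [AllU, Finset.mem_insert, Finset.mem_biUnion, Finset.mem_range, alw,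
    Finset.mem_filter, Finset.mem_univ, true_and]
  constructor
  · rintro (rfl | ⟨m, hm, x, hx, hv⟩)
    · exact ⟨List.isChain_nil, by simp, by simp⟩
    · obtain ⟨h1, h2, h3⟩ := (mem_RW m x v).mp hv
      refine ⟨h1, by omega, ?_⟩
      intro z hz
      rw [h3, Option.mem_def, Option.some.injEq] at hz
      subst hz
      exact hx
  · rintro ⟨h1, h2, h3⟩
    cases v with
    | nil => left; rfl
    | cons z v' =>
      right
      refine ⟨v'.length, by simpa using h2, z, h3 z rfl, ?_⟩
      exact (mem_RW _ z _).mpr ⟨h1, rfl, rfl⟩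

lemma geom_aux : ∀ r : ℕ, 1 + ∑ m ∈ Finset.range r, 2 * 3 ^ m = 3 ^ r := by
  intro r
  induction r with
  | zero => simp
  | succ n ih =>
    rw [Finset.sum_range_succ, pow_succ]
    omega

lemma card_AllU (t : Bool) (r : ℕ) : (AllU t r).card = 3 ^ r := by
  rw [AllU, Finset.card_insert_of_notMem, Finset.card_biUnion]
  · have hi : ∀ m ∈ Finset.range r, ((alw t).biUnion fun x => RW m x).card = 2 * 3 ^ m := by
      intro m _
      rw [Finset.card_biUnion]
      · rw [Finset.sum_congr rfl fun x _ => card_RW m x, Finset.sum_const, smul_eq_mul]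
        have : (alw t).card = 2 := by cases t <;> decide
        rw [this]
      · intro x _ x' _ hne
        rw [Function.onFun, Finset.disjoint_left]
        intro l hl hl'
        have h1 := ((mem_RW m x l).mp hl).2.2
        have h2 := ((mem_RW m x' l).mp hl').2.2
        rw [h1] at h2
        rw [Option.some.injEq] at h2
        exact hne h2
    rw [Finset.sum_congr rfl hi]
    rw [← geom_aux r]
    omega
  · intro m hm m' hm' hne
    rw [Function.onFun, Finset.disjoint_left]
    intro l hl hl'
    simp only [Finset.mem_biUnion] at hl hl'
    obtain ⟨x, -, hl⟩ := hl
    obtain ⟨x', -, hl'⟩ := hl'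
    have h1 := ((mem_RW m x l).mp hl).2.1
    have h2 := ((mem_RW m' x' l).mp hl').2.1
    rw [h1] at h2
    omega
  · intro hmem
    simp only [Finset.mem_biUnion] at hmem
    obtain ⟨m, -, x, -, hx⟩ := hmem
    have := ((mem_RW m x []).mp hx).2.1
    simp at this

/-! ### The image finset and the main theorem -/

def Img (r : ℕ) : Finset F2 :=
  (Finset.univ : Finset (Bool × Bool)).biUnion fun ts =>
    (AllU ts.1 r).image fun v => FreeGroup.mk (W v.reverse ts.1 ts.2 (r + 1 - v.length))

lemma good_of_mem {t : Bool} {r : ℕ} {v : List Ltr} (hv : v ∈ AllU t r) :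
    Good v.reverse t (r + 1 - v.length) := by
  obtain ⟨h1, h2, h3⟩ := mem_AllU.mp hv
  refine ⟨h1.rev, by omega, ?_⟩
  intro x hx
  rw [List.getLast?_reverse] at hx
  exact h3 x hx

lemma img_inj {r : ℕ} {t s t' s' : Bool} {v v' : List Ltr}
    (hv : v ∈ AllU t r) (hv' : v' ∈ AllU t' r)
    (he : FreeGroup.mk (W v.reverse t s (r + 1 - v.length)) =
      FreeGroup.mk (W v'.reverse t' s' (r + 1 - v'.length))) :
    t = t' ∧ s = s' ∧ v = v' := by
  have h1 := congrArg FreeGroup.toWord he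
  rw [toWord_mk_of_rd (rd_W (good_of_mem hv)), toWord_mk_of_rd (rd_W (good_of_mem hv'))] at h1
  obtain ⟨e1, e2, e3, -⟩ :=
    W_injective _ _ _ _ _ _ _ _ (good_of_mem hv) (good_of_mem hv') h1
  exact ⟨e2, e3, List.reverse_injective e1⟩

lemma cw_conj_form (t s : Bool) (k : ℕ) :
    ∃ (w : F2) (k' : ℤ), FreeGroup.mk (cw t s k) = w * (α * β) ^ k' * w⁻¹ := by
  have hba : (β * α) ^ k = β * (α * β) ^ k * β⁻¹ := by
    rw [← conj_pow]
    congr 1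
    group
  cases t
  · cases s
    · refine ⟨β, -(k : ℤ), ?_⟩
      rw [mk_cw_false, zpow_neg, zpow_natCast]
      simp only [pr, Bool.false_eq_true, if_false]
      rw [hba]
      group
    · refine ⟨β, (k : ℤ), ?_⟩
      rw [mk_cw_true, zpow_natCast]
      simpa only [pr, Bool.false_eq_true, if_false] using hba
  · cases s
    · refine ⟨1, -(k : ℤ), ?_⟩
      rw [mk_cw_false, zpow_neg, zpow_natCast]
      simp [pr]
    · refine ⟨1, (k : ℤ), ?_⟩
      rw [mk_cw_true, zpow_natCast]
      simp [pr]

lemma C_eq_Img (r : ℕ) : C (α * β) (2 * r + 2) = ↑(Img r) := by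
  ext g
  simp only [Img, Finset.coe_biUnion, Finset.mem_coe, Finset.mem_biUnion, Finset.mem_univ,
    true_and, Finset.mem_image, Set.mem_iUnion, exists_prop]
  constructor
  · rintro ⟨hnorm, w, k0, rfl⟩
    have hS := conj_mem_S w _ (zpow_mem_S k0)
    rcases hS with h1 | ⟨u, t, s, k, hG, hW⟩
    · rw [h1, FreeGroup.norm_one] at hnorm
      omega
    · rw [hW] at hnorm ⊢
      rw [norm_W hG] at hnorm
      have hlen : u.length + k = r + 1 := by omega
      have hk1 := hG.2.1
      refine ⟨(t, s), u.reverse, ?_, ?_⟩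
      · rw [mem_AllU]
        refine ⟨hG.1.rev, by rw [List.length_reverse]; omega, ?_⟩
        intro x hx
        rw [List.head?_reverse] at hx
        exact hG.2.2 x hx
      · have hlen2 : r + 1 - u.reverse.length = k := by
          rw [List.length_reverse]
          omega
        rw [List.reverse_reverse, hlen2]
  · rintro ⟨⟨t, s⟩, v, hv, rfl⟩
    constructor
    · rw [norm_W (good_of_mem hv), List.length_reverse]
      have := (mem_AllU.mp hv).2.1
      omega
    · obtain ⟨w, k', hcw⟩ := cw_conj_form t s (r + 1 - v.length)
      refine ⟨FreeGroup.mk v.reverse * w, k', ?_⟩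
      rw [mk_W, hcw]
      group

/-- The number of elements of word length exactly `2r+2` that are conjugates of a
power of `αβ` is `4·3^r`. -/
theorem card_C_alphabeta_even (r : ℕ) :
    Nat.card (C (α * β) (2 * r + 2)) = 4 * 3 ^ r := by
  rw [C_eq_Img, Nat.card_coe_set_eq, Set.ncard_coe_finset]
  rw [Img, Finset.card_biUnion]
  · have hi : ∀ ts : Bool × Bool,
        ((AllU ts.1 r).image fun v =>
          FreeGroup.mk (W v.reverse ts.1 ts.2 (r + 1 - v.length))).card = 3 ^ r := by
      intro ts
      rw [Finset.card_image_of_injOn, card_AllU]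
      intro v hv v' hv' he
      exact (img_inj hv hv' he).2.2
    rw [Finset.sum_congr rfl fun ts _ => hi ts, Finset.sum_const, smul_eq_mul,
      Finset.card_univ]
    rfl
  · intro ts _ ts' _ hne
    rw [Function.onFun, Finset.disjoint_left]
    intro g hg hg'
    obtain ⟨v, hv, rfl⟩ := Finset.mem_image.mp hg
    obtain ⟨v', hv', he⟩ := Finset.mem_image.mp hg'
    obtain ⟨e1, e2, -⟩ := img_inj hv' hv he
    apply hne
    rw [Prod.ext_iff]
    exact ⟨e1.symm, e2.symm⟩
end

section
/- In the free group F₂ on α, β, if an element has even word length n = 2r+2 and is a conjugate of some power (αβ)ᵏ with |k| = r+1, then it is one of the four elements (αβ)^(r+1), (βα)^(r+1), (αβ)^(-(r+1)), (βα)^(-(r+1)). -/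
open FreeGroup List

/-- Non-cancellation relation on letters. -/
def NC (p q : Fin 2 × Bool) : Prop := ¬(p.1 = q.1 ∧ p.2 = !q.2)

lemma reduce_eq_self_of_chain' : ∀ {L : List (Fin 2 × Bool)},
    List.Chain' NC L → FreeGroup.reduce L = L := by
  intro L h
  induction L with
  | nil => rfl
  | cons x L ih =>
    rw [List.Chain', List.isChain_cons] at h
    rw [FreeGroup.reduce.cons, ih h.2]
    cases L with
    | nil => rfl
    | cons hd tl =>
      have hnc := h.1 hd (by simp)
      simp only [NC] at hnc
      simp [hnc]

lemma chain'_of_reduce_eq_self : ∀ {L : List (Fin 2 × Bool)},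
    FreeGroup.reduce L = L → List.Chain' NC L := by
  intro L h
  induction L with
  | nil => simp [List.Chain']
  | cons x L ih =>
    rw [FreeGroup.reduce.cons] at h
    have hlen : (FreeGroup.reduce L).length ≤ L.length :=
      FreeGroup.Red.length_le FreeGroup.reduce.red
    cases hL : FreeGroup.reduce L with
    | nil =>
      rw [hL] at h
      simp only at h
      have hLnil : L = [] := by
        cases L with
        | nil => rfl
        | cons a t => simp at h
      subst hLnil
      simp [List.Chain']
    | cons hd tl =>
      rw [hL] at h hlen
      change (if x.1 = hd.1 ∧ x.2 = !hd.2 then tl else x :: hd :: tl) = x :: L at h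
      by_cases hc : x.1 = hd.1 ∧ x.2 = !hd.2
      · rw [if_pos hc] at h
        have := congrArg List.length h
        simp at this hlen
        omega
      · rw [if_neg hc] at h
        simp only [List.cons.injEq] at h
        have hL2 : L = hd :: tl := h.2.symm
        subst hL2
        rw [List.Chain', List.isChain_cons]
        exact ⟨fun y hy => by simp at hy; subst hy; exact hc, ih hL⟩

lemma norm_mk_of_chain' {L : List (Fin 2 × Bool)} (h : List.Chain' NC L) :
    (FreeGroup.mk L).norm = L.length := by
  show (FreeGroup.mk L).toWord.length = L.length
  rw [FreeGroup.toWord_mk, reduce_eq_self_of_chain' h]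

/-- The alternating word `(c d)^n`. -/
def P (c d : Fin 2) : ℕ → List (Fin 2 × Bool)
  | 0 => []
  | n + 1 => (c, true) :: (d, true) :: P c d n

lemma P_length (c d : Fin 2) (n : ℕ) : (P c d n).length = 2 * n := by
  induction n with
  | zero => rfl
  | succ n ih => simp [P, ih]; omega

lemma mk_P (c d : Fin 2) (n : ℕ) :
    FreeGroup.mk (P c d n) = (FreeGroup.of c * FreeGroup.of d) ^ n := by
  induction n with
  | zero => rw [pow_zero]; rfl
  | succ n ih =>
    rw [pow_succ']
    have : P c d (n+1) = [(c, true)] ++ [(d, true)] ++ P c d n := rfl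
    rw [this, ← FreeGroup.mul_mk, ← FreeGroup.mul_mk, ih]
    rfl

lemma P_snd (c d : Fin 2) (n : ℕ) : ∀ p ∈ P c d n, p.2 = true := by
  induction n with
  | zero => simp [P]
  | succ n ih =>
    intro p hp
    simp [P] at hp
    rcases hp with h | h | h
    · simp [h]
    · simp [h]
    · exact ih p h

lemma chain'_true {L : List (Fin 2 × Bool)} (h : ∀ p ∈ L, p.2 = true) :
    List.Chain' NC L := by
  induction L with
  | nil => simp [List.Chain']
  | cons x L ih =>
    rw [List.Chain', List.isChain_cons]
    constructor
    · intro y hy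
      have hyL : y ∈ L := List.mem_of_mem_head? hy
      have h1 := h x (by simp)
      have h2 := h y (by simp [hyL])
      simp [NC, h1, h2]
    · exact ih fun p hp => h p (by simp [hp])

lemma P_head (c d : Fin 2) (n : ℕ) : (P c d (n+1)).head? = some (c, true) := rfl

lemma P_getLast (c d : Fin 2) (n : ℕ) : (P c d (n+1)).getLast? = some (d, true) := by
  induction n with
  | zero => rfl
  | succ n ih =>
    show ((c,true) :: (d,true) :: (c,true) :: (d,true) :: P c d n).getLast? = _
    rw [List.getLast?_cons_cons, List.getLast?_cons_cons]
    exact ih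

lemma conj_pow_left (u v : F2) (n : ℕ) : u⁻¹ * (u * v) ^ n * u = (v * u) ^ n := by
  have h : SemiconjBy u (v * u) (u * v) := by
    unfold SemiconjBy; rw [mul_assoc]
  have := (h.pow_right n).eq
  rw [mul_assoc, ← this, ← mul_assoc, inv_mul_cancel, one_mul]

lemma conj_pow_right (u v : F2) (n : ℕ) : v * (u * v) ^ n * v⁻¹ = (v * u) ^ n := by
  have h : SemiconjBy v (u * v) (v * u) := by
    unfold SemiconjBy; rw [mul_assoc]
  have := (h.pow_right n).eq
  rw [this, mul_assoc, mul_inv_cancel, mul_one]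

lemma NC_inv {p q : Fin 2 × Bool} (h : NC p q) : NC (q.1, !q.2) (p.1, !p.2) := by
  simp only [NC, not_and] at h ⊢
  intro h1 h2
  exact h h1.symm (by revert h2; cases p.2 <;> cases q.2 <;> simp)

lemma chain'_invRev {L : List (Fin 2 × Bool)} (h : List.Chain' NC L) :
    List.Chain' NC (FreeGroup.invRev L) := by
  apply chain'_of_reduce_eq_self
  rw [FreeGroup.reduce_invRev, reduce_eq_self_of_chain' h]

lemma norm_conj_eq (W' : List (Fin 2 × Bool)) (x : Fin 2 × Bool) (c d : Fin 2) (n : ℕ)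
    (hcd : c ≠ d) (hW : List.Chain' NC (W' ++ [x]))
    (hx : x = (c, true) ∨ x = (d, false)) :
    (FreeGroup.mk W' * (FreeGroup.mk [x] * (FreeGroup.of c * FreeGroup.of d) ^ (n+1) *
      (FreeGroup.mk [x])⁻¹) * (FreeGroup.mk W')⁻¹).norm = 2 * W'.length + 2 * (n+1) + 2 := by
  have hinv : (FreeGroup.mk [x])⁻¹ = FreeGroup.mk [(x.1, !x.2)] := by
    rw [FreeGroup.inv_mk]; rfl
  have hel : FreeGroup.mk W' * (FreeGroup.mk [x] * (FreeGroup.of c * FreeGroup.of d) ^ (n+1) *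
      (FreeGroup.mk [x])⁻¹) * (FreeGroup.mk W')⁻¹ =
      FreeGroup.mk (W' ++ ([x] ++ P c d (n+1) ++ [(x.1, !x.2)]) ++ FreeGroup.invRev W') := by
    rw [hinv, ← mk_P, FreeGroup.inv_mk, FreeGroup.mul_mk, FreeGroup.mul_mk,
      FreeGroup.mul_mk, FreeGroup.mul_mk]
  -- chain facts
  have hchainW' : List.Chain' NC W' := (List.isChain_append.1 hW).1
  have hjunc : ∀ a ∈ W'.getLast?, NC a x := by
    intro a ha
    exact (List.isChain_append.1 hW).2.2 a ha x (by simp)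
  have hchainM : List.Chain' NC ([x] ++ P c d (n+1) ++ [(x.1, !x.2)]) := by
    rw [List.append_assoc, List.Chain', List.isChain_append]
    refine ⟨by simp, ?_, ?_⟩
    · rw [List.isChain_append]
      refine ⟨chain'_true (P_snd c d (n+1)), by simp, ?_⟩
      intro a ha b hb
      rw [P_getLast] at ha
      simp at ha hb
      subst ha; subst hb
      rcases hx with h | h <;> subst h <;> simp [NC] <;> tauto
    · intro a ha b hb
      simp at ha
      subst ha
      rw [List.head?_append, P_head] at hb
      simp at hb
      subst hb
      rcases hx with h | h <;> subst h <;> simp [NC] <;> tauto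
  have hchainBig : List.Chain' NC (W' ++ ([x] ++ P c d (n+1) ++ [(x.1, !x.2)]) ++
      FreeGroup.invRev W') := by
    rw [List.Chain', List.isChain_append, List.isChain_append]
    refine ⟨⟨hchainW', hchainM, ?_⟩, chain'_invRev hchainW', ?_⟩
    · intro a ha b hb
      simp at hb
      subst hb
      exact hjunc a ha
    · intro a ha b hb
      rw [List.getLast?_append, show (([x] ++ P c d (n+1)) ++ [(x.1, !x.2)]).getLast? =
        some (x.1, !x.2) from List.getLast?_concat] at ha
      simp at ha
      subst ha
      -- b is head of invRev W'
      unfold FreeGroup.invRev at hb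
      rw [List.head?_reverse] at hb
      rw [List.getLast?_map] at hb
      cases hW'last : W'.getLast? with
      | none => rw [hW'last] at hb; simp at hb
      | some l =>
        rw [hW'last] at hb
        simp at hb
        subst hb
        exact NC_inv (hjunc l hW'last)
  rw [hel, norm_mk_of_chain' hchainBig]
  simp [P_length, FreeGroup.invRev_length]
  omega

lemma fin2_cases {c d e : Fin 2} (h : c ≠ d) : e = c ∨ e = d := by
  fin_cases c <;> fin_cases d <;> fin_cases e <;> simp_all

lemma main_lemma (m : ℕ) : ∀ (N : ℕ) (w : F2) (c d : Fin 2), c ≠ d →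
    w.toWord.length ≤ N →
    (w * (FreeGroup.of c * FreeGroup.of d) ^ (m+1) * w⁻¹).norm = 2 * (m+1) →
    (w * (FreeGroup.of c * FreeGroup.of d) ^ (m+1) * w⁻¹ = (FreeGroup.of c * FreeGroup.of d) ^ (m+1) ∨
     w * (FreeGroup.of c * FreeGroup.of d) ^ (m+1) * w⁻¹ = (FreeGroup.of d * FreeGroup.of c) ^ (m+1)) := by
  intro N
  induction N with
  | zero =>
    intro w c d hcd hw _
    have : w = 1 := FreeGroup.toWord_eq_nil_iff.1 (List.eq_nil_of_length_eq_zero (Nat.le_zero.1 hw))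
    subst this
    left; simp
  | succ N ih =>
    intro w c d hcd hw hnorm
    by_cases hwnil : w.toWord = []
    · have : w = 1 := FreeGroup.toWord_eq_nil_iff.1 hwnil
      subst this
      left; simp
    · set W := w.toWord with hWdef
      have hchainW : List.Chain' NC W := chain'_of_reduce_eq_self (FreeGroup.reduce_toWord w)
      set x := W.getLast hwnil with hxdef
      set W' := W.dropLast with hW'def
      have hWsplit : W' ++ [x] = W := List.dropLast_append_getLast hwnil
      have hchain' : List.Chain' NC (W' ++ [x]) := hWsplit ▸ hchainW
      have hw' : w = FreeGroup.mk W' * FreeGroup.mk [x] := by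
        rw [FreeGroup.mul_mk, hWsplit, hWdef, FreeGroup.mk_toWord]
      have hW'len : W'.length ≤ N := by
        have : W.length ≤ N + 1 := hw
        have h2 : W'.length = W.length - 1 := by simp [hW'def]
        omega
      have hw'toWord : (FreeGroup.mk W').toWord = W' := by
        rw [FreeGroup.toWord_mk]
        exact reduce_eq_self_of_chain' (List.isChain_append.1 hchain').1
      have hx1 : x.1 = c ∨ x.1 = d := fin2_cases hcd
      have hxcases : x = (c, true) ∨ x = (c, false) ∨ x = (d, true) ∨ x = (d, false) := by
        rcases hx1 with h | h <;> cases hx2 : x.2 <;>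
          [(right; left); (left); (right; right; right); (right; right; left)] <;>
          (ext : 1 <;> simp [h, hx2])
      -- the general conjugation rewriting
      have hgrw : w * (FreeGroup.of c * FreeGroup.of d) ^ (m+1) * w⁻¹ =
          FreeGroup.mk W' * (FreeGroup.mk [x] * (FreeGroup.of c * FreeGroup.of d) ^ (m+1) *
            (FreeGroup.mk [x])⁻¹) * (FreeGroup.mk W')⁻¹ := by
        rw [hw']; group
      rcases hxcases with hxv | hxv | hxv | hxv
      · -- x = (c, true) : contradiction
        exfalso
        rw [hgrw, norm_conj_eq W' x c d m hcd hchain' (Or.inl hxv)] at hnorm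
        omega
      · -- x = (c, false) : mk [x] = (of c)⁻¹, cyclic shift to (d c)^(m+1)
        have hmkx : FreeGroup.mk [x] = (FreeGroup.of c)⁻¹ := by
          rw [hxv, show (FreeGroup.of c)⁻¹ = FreeGroup.mk (FreeGroup.invRev [(c, true)]) from
            FreeGroup.inv_mk]
          rfl
        have hg2 : w * (FreeGroup.of c * FreeGroup.of d) ^ (m+1) * w⁻¹ =
            FreeGroup.mk W' * (FreeGroup.of d * FreeGroup.of c) ^ (m+1) * (FreeGroup.mk W')⁻¹ := by
          rw [hgrw, hmkx]
          rw [show (FreeGroup.of c)⁻¹ * (FreeGroup.of c * FreeGroup.of d) ^ (m+1) *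
            ((FreeGroup.of c)⁻¹)⁻¹ = (FreeGroup.of d * FreeGroup.of c) ^ (m+1) by
              rw [inv_inv]; exact conj_pow_left _ _ _]
        rw [hg2] at hnorm ⊢
        have := ih (FreeGroup.mk W') d c hcd.symm (by rw [hw'toWord]; exact hW'len) hnorm
        tauto
      · -- x = (d, true) : mk [x] = of d, cyclic shift to (d c)^(m+1)
        have hmkx : FreeGroup.mk [x] = FreeGroup.of d := by rw [hxv]; rfl
        have hg2 : w * (FreeGroup.of c * FreeGroup.of d) ^ (m+1) * w⁻¹ =
            FreeGroup.mk W' * (FreeGroup.of d * FreeGroup.of c) ^ (m+1) * (FreeGroup.mk W')⁻¹ := by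
          rw [hgrw, hmkx, show FreeGroup.of d * (FreeGroup.of c * FreeGroup.of d) ^ (m+1) *
            (FreeGroup.of d)⁻¹ = (FreeGroup.of d * FreeGroup.of c) ^ (m+1) from
            conj_pow_right _ _ _]
        rw [hg2] at hnorm ⊢
        have := ih (FreeGroup.mk W') d c hcd.symm (by rw [hw'toWord]; exact hW'len) hnorm
        tauto
      · -- x = (d, false) : contradiction
        exfalso
        rw [hgrw, norm_conj_eq W' x c d m hcd hchain' (Or.inr hxv)] at hnorm
        omega

/-- If `g` has word length `2r+2` and is a conjugate of `(αβ)ᵏ` with `|k| = r+1`,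
then `g` is one of `(αβ)^(r+1)`, `(βα)^(r+1)`, `(αβ)^-(r+1)`, `(βα)^-(r+1)`. -/
theorem max_power_conjugates (r : ℕ) (g : F2)
    (hnorm : FreeGroup.norm g = 2 * r + 2)
    (hconj : ∃ (w : F2) (k : ℤ), k.natAbs = r + 1 ∧ g = w * (α * β) ^ k * w⁻¹) :
    g = (α * β) ^ (r + 1) ∨ g = (β * α) ^ (r + 1) ∨
      g = ((α * β) ^ (r + 1))⁻¹ ∨ g = ((β * α) ^ (r + 1))⁻¹ := by
  obtain ⟨w, k, hk, hg⟩ := hconj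
  have hαβ : α * β = FreeGroup.of 0 * FreeGroup.of 1 := rfl
  have hβα : β * α = FreeGroup.of 1 * FreeGroup.of 0 := rfl
  have h01 : (0 : Fin 2) ≠ 1 := by decide
  rcases Int.natAbs_eq k with hk2 | hk2
  · rw [hk2, hk] at hg
    rw [zpow_natCast] at hg
    have := main_lemma r w.toWord.length w 0 1 h01 le_rfl
      (by rw [← hαβ, ← hg, hnorm]; ring)
    rw [← hαβ, ← hβα, ← hg] at this
    tauto
  · rw [hk2, hk] at hg
    rw [zpow_neg, zpow_natCast] at hg
    have hginv : g⁻¹ = w * (α * β) ^ (r + 1) * w⁻¹ := by rw [hg]; group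
    have := main_lemma r w.toWord.length w 0 1 h01 le_rfl
      (by rw [← hαβ, ← hginv, FreeGroup.norm_inv_eq, hnorm]; ring)
    rw [← hαβ, ← hβα, ← hginv] at this
    rcases this with h | h
    · right; right; left; rw [← h]; group
    · right; right; right; rw [← h]; group
end

section
/- In the free group F₂ on α, β, for every nonnegative integer r, the number of elements of word length exactly 2r+1 that are conjugates of a power of α, a power of β, or a power of αβ is 4·3^r. -/
set_option linter.unusedSectionVars false
open FreeGroup List

local notation "Chain'" => List.IsChain

variable {A : Type*} [DecidableEq A]

/-- No-cancellation relation between adjacent letters. -/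
def NRed (a b : A × Bool) : Prop := ¬(a.1 = b.1 ∧ a.2 = !b.2)

lemma reduce_eq_self_s9 {L : List (A × Bool)} (h : Chain' NRed L) : FreeGroup.reduce L = L := by
  induction L with
  | nil => rfl
  | cons x L ih =>
    have hL := ih h.tail
    rw [FreeGroup.reduce.cons, hL]
    cases L with
    | nil => rfl
    | cons b tl =>
      have : NRed x b := (List.isChain_cons_cons.mp h).1
      simp only [NRed] at this
      simp [this]

lemma chain'_reduce (L : List (A × Bool)) : Chain' NRed (FreeGroup.reduce L) := by
  induction L with
  | nil => simp
  | cons x L ih =>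
    rw [FreeGroup.reduce.cons]
    cases hR : FreeGroup.reduce L with
    | nil => simp
    | cons b tl =>
      rw [hR] at ih
      by_cases hc : x.1 = b.1 ∧ x.2 = !b.2
      · simp only [hc, if_true]
        exact ih.tail
      · simp only [hc, if_false]
        exact List.isChain_cons_cons.mpr ⟨hc, ih⟩

lemma toWord_mk_eq {L : List (A × Bool)} (h : Chain' NRed L) : (FreeGroup.mk L).toWord = L := by
  rw [FreeGroup.toWord_mk, reduce_eq_self_s9 h]

lemma chain'_toWord (g : FreeGroup A) : Chain' NRed g.toWord := by
  have : g.toWord = (FreeGroup.mk g.toWord).toWord := by rw [FreeGroup.mk_toWord]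
  rw [this, FreeGroup.toWord_mk]
  exact chain'_reduce _

lemma norm_mk_eq {L : List (A × Bool)} (h : Chain' NRed L) : (FreeGroup.mk L).norm = L.length := by
  rw [FreeGroup.norm, toWord_mk_eq h]

lemma chain'_invRev_s9 {L : List (A × Bool)} (h : Chain' NRed L) : Chain' NRed (invRev L) := by
  rw [FreeGroup.invRev, List.isChain_reverse, List.isChain_map]
  refine h.imp ?_
  rintro ⟨a1, a2⟩ ⟨b1, b2⟩ hab ⟨h1, h2⟩
  exact hab ⟨h1.symm, by cases a2 <;> cases b2 <;> simp_all⟩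

lemma invRev_replicate (t : ℕ) (i : A) (e : Bool) :
    FreeGroup.invRev (replicate t (i, e)) = replicate t (i, !e) := by
  simp [FreeGroup.invRev]

lemma mk_replicate_true (t : ℕ) (i : A) :
    FreeGroup.mk (replicate t (i, true)) = (FreeGroup.of i) ^ t := by
  rw [← FreeGroup.toWord_of_pow, FreeGroup.mk_toWord]

lemma mk_replicate_false (t : ℕ) (i : A) :
    FreeGroup.mk (replicate t (i, false)) = ((FreeGroup.of i) ^ t)⁻¹ := by
  rw [← mk_replicate_true t i, FreeGroup.inv_mk, invRev_replicate]
  norm_num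
section Runs
variable {X : Type*}

lemma head?_replicate_append (t : ℕ) (ht : 1 ≤ t) (x : X) (l : List X) :
    (List.replicate t x ++ l).head? = some x := by
  cases t with
  | zero => omega
  | succ t => simp [List.replicate_succ]

lemma exists_run : ∀ (L : List X), L ≠ [] →
    ∃ (u : List X) (t : ℕ) (x : X), 1 ≤ t ∧ L = u ++ List.replicate t x ∧
      ∀ a ∈ u.getLast?, a ≠ x := by
  intro L
  induction L with
  | nil => intro h; exact absurd rfl h
  | cons c L ih =>
    intro _
    rcases eq_or_ne L [] with rfl | hL
    · exact ⟨[], 1, c, le_refl 1, by simp, by simp⟩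
    · obtain ⟨u, t, x, ht, hdec, hlast⟩ := ih hL
      cases u with
      | nil =>
        rcases eq_or_ne c x with rfl | hcx
        · refine ⟨[], t + 1, c, by omega, ?_, by simp⟩
          simp only [List.nil_append] at hdec
          simp [hdec, List.replicate_succ]
        · exact ⟨[c], t, x, ht, by simp [hdec], by simpa using hcx⟩
      | cons d u' =>
        refine ⟨c :: d :: u', t, x, ht, by simp [hdec], ?_⟩
        rw [List.getLast?_cons_cons]
        exact hlast

lemma run_unique_aux [DecidableEq X] : ∀ (t t' : ℕ) (x : X) (v v' : List X),
    (∀ a ∈ v.head?, a ≠ x) → (∀ a ∈ v'.head?, a ≠ x) →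
    List.replicate t x ++ v = List.replicate t' x ++ v' → t = t' ∧ v = v' := by
  intro t
  induction t with
  | zero =>
    intro t' x v v' hv hv' heq
    cases t' with
    | zero => simpa using heq
    | succ t' =>
      simp only [List.replicate, List.nil_append] at heq
      exfalso
      exact hv x (by rw [heq]; simp) rfl
  | succ t ih =>
    intro t' x v v' hv hv' heq
    cases t' with
    | zero =>
      simp only [List.replicate, List.nil_append] at heq
      exfalso
      exact hv' x (by rw [← heq]; simp) rfl
    | succ t' =>
      simp only [List.replicate_succ, List.cons_append, List.cons.injEq, true_and] at heq
      obtain ⟨h1, h2⟩ := ih t' x v v' hv hv' heq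
      exact ⟨by omega, h2⟩

lemma run_unique [DecidableEq X] {t t' : ℕ} {x x' : X} {u u' : List X}
    (ht : 1 ≤ t) (ht' : 1 ≤ t')
    (hu : ∀ a ∈ u.getLast?, a ≠ x) (hu' : ∀ a ∈ u'.getLast?, a ≠ x')
    (heq : u ++ List.replicate t x = u' ++ List.replicate t' x') :
    u = u' ∧ t = t' ∧ x = x' := by
  have hrev := congrArg List.reverse heq
  simp only [List.reverse_append, List.reverse_replicate] at hrev
  have hxx : x = x' := by
    have h1 := head?_replicate_append t ht x u.reverse
    have h2 := head?_replicate_append t' ht' x' u'.reverse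
    rw [hrev] at h1
    rw [h1] at h2
    exact Option.some_injective _ h2
  subst hxx
  have h1 : ∀ a ∈ u.reverse.head?, a ≠ x := by
    intro a ha
    rw [List.head?_reverse] at ha
    exact hu a ha
  have h2 : ∀ a ∈ u'.reverse.head?, a ≠ x := by
    intro a ha
    rw [List.head?_reverse] at ha
    exact hu' a ha
  obtain ⟨htt, huu⟩ := run_unique_aux t t' x u.reverse u'.reverse h1 h2 hrev
  exact ⟨List.reverse_injective huu, htt, rfl⟩

lemma take_run {u z : List X} {s t : ℕ} (hts : t ≤ s) (x : X) :
    (u ++ (List.replicate s x ++ z)).take (u.length + t) = u ++ List.replicate t x := by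
  rw [List.take_append, List.take_append_of_le_length (by simp [hts]), List.take_replicate,
    Nat.add_sub_cancel_left, min_eq_left hts, List.take_of_length_le (by omega)]
end Runs
section Conj
open FreeGroup List
variable {A : Type*} [DecidableEq A]

lemma chain'_NRed_replicate (t : ℕ) (x : A × Bool) : Chain' NRed (replicate t x) := by
  induction t with
  | zero => simp
  | succ t ih =>
    cases t with
    | zero => simp
    | succ s =>
      rw [List.replicate_succ]
      refine List.isChain_cons_cons.mpr ⟨?_, ih⟩
      · intro ⟨_, h2⟩
        simp at h2

lemma head?_invRev_s9 (u : List (A × Bool)) :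
    (FreeGroup.invRev u).head? = u.getLast?.map (fun a => (a.1, !a.2)) := by
  rw [FreeGroup.invRev, List.head?_reverse, List.getLast?_map]

lemma chain'_conj {u : List (A × Bool)} (hu : Chain' NRed u) {i : A} (e : Bool) {t : ℕ}
    (ht : 1 ≤ t) (hlast : ∀ a ∈ u.getLast?, a.1 ≠ i) :
    Chain' NRed (u ++ (replicate t (i, e) ++ FreeGroup.invRev u)) := by
  rw [List.isChain_append]
  refine ⟨hu, ?_, ?_⟩
  · rw [List.isChain_append]
    refine ⟨chain'_NRed_replicate t _, chain'_invRev_s9 hu, ?_⟩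
    · intro x hx y hy
      rw [List.getLast?_replicate] at hx
      rw [if_neg (by omega)] at hx
      rw [Option.mem_def, Option.some.injEq] at hx
      subst hx
      rw [head?_invRev_s9] at hy
      obtain ⟨a, ha, rfl⟩ := Option.map_eq_some_iff.mp hy
      intro ⟨h1, _⟩
      exact hlast a ha h1.symm
  · intro x hx y hy
    rw [head?_replicate_append t ht] at hy
    rw [Option.mem_def, Option.some.injEq] at hy
    subst hy
    intro ⟨h1, _⟩
    exact hlast x hx h1

lemma conj_reduce (i : A) (X : FreeGroup A)
    (hX : ∀ b : Bool, FreeGroup.mk [(i, b)] * X = X * FreeGroup.mk [(i, b)]) (w : FreeGroup A) :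
    ∃ u : List (A × Bool), Chain' NRed u ∧ (∀ a ∈ u.getLast?, a.1 ≠ i) ∧
      w * X * w⁻¹ = FreeGroup.mk u * X * (FreeGroup.mk u)⁻¹ := by
  obtain ⟨n, hn⟩ : ∃ n, w.norm = n := ⟨_, rfl⟩
  induction n using Nat.strong_induction_on generalizing w with
  | _ n ih =>
  cases hL : w.toWord.getLast? with
  | none =>
    rw [List.getLast?_eq_none_iff] at hL
    refine ⟨[], by simp, by simp, ?_⟩
    have : w = 1 := by rw [← FreeGroup.toWord_eq_nil_iff, hL]
    rw [this]
    simp [FreeGroup.one_eq_mk]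
  | some a =>
    by_cases hai : a.1 = i
    · -- strip the last letter
      have hne : w.toWord ≠ [] := by
        intro h; rw [h] at hL; simp at hL
      have hdec : w.toWord = w.toWord.dropLast ++ [a] := by
        conv_lhs => rw [← List.dropLast_concat_getLast hne]
        congr 1
        rw [List.getLast?_eq_getLast hne, Option.some.injEq] at hL
        simp [hL]
      have hw : w = FreeGroup.mk w.toWord.dropLast * FreeGroup.mk [a] := by
        rw [FreeGroup.mul_mk, ← hdec, FreeGroup.mk_toWord]
      have hchain : Chain' NRed w.toWord.dropLast := by
        have := chain'_toWord w
        rw [hdec, List.isChain_append] at this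
        exact this.1
      set w' := FreeGroup.mk w.toWord.dropLast with hw'
      have hnorm' : w'.norm < n := by
        rw [hw', norm_mk_eq hchain]
        have : w.norm = w.toWord.length := rfl
        rw [← hn] at *
        rw [this, hdec]
        simp
      obtain ⟨u, hu1, hu2, hu3⟩ := ih w'.norm hnorm' w' rfl
      refine ⟨u, hu1, hu2, ?_⟩
      rw [← hu3, hw]
      have ha' : (a.1, a.2) = a := rfl
      have hcomm : FreeGroup.mk [a] * X * (FreeGroup.mk [a])⁻¹ = X := by
        rw [← ha', hai, hX a.2, mul_inv_cancel_right]
      calc w' * FreeGroup.mk [a] * X * (w' * FreeGroup.mk [a])⁻¹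
          = w' * (FreeGroup.mk [a] * X * (FreeGroup.mk [a])⁻¹) * w'⁻¹ := by
            rw [mul_inv_rev]; group
        _ = w' * X * w'⁻¹ := by rw [hcomm]
    · refine ⟨w.toWord, chain'_toWord w, ?_, by rw [FreeGroup.mk_toWord]⟩
      intro b hb
      rw [hL, Option.mem_def, Option.some.injEq] at hb
      subst hb
      exact hai
end Conj
section Parity
open FreeGroup List
variable {A : Type*} [DecidableEq A]

def par : FreeGroup A →* Multiplicative (ZMod 2) :=
  FreeGroup.lift fun _ => Multiplicative.ofAdd 1

lemma par_mk (L : List (A × Bool)) :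
    par (FreeGroup.mk L) = Multiplicative.ofAdd ((L.length : ZMod 2)) := by
  induction L with
  | nil =>
    have : FreeGroup.mk ([] : List (A × Bool)) = 1 := (FreeGroup.one_eq_mk).symm
    rw [this, MonoidHom.map_one par]
    simp
  | cons x L ih =>
    rw [← List.singleton_append, ← FreeGroup.mul_mk, MonoidHom.map_mul par, ih]
    have hx : par (FreeGroup.mk [x]) = Multiplicative.ofAdd (1 : ZMod 2) := by
      rcases x with ⟨a, b⟩
      cases b
      · have h1 : FreeGroup.mk [(a, false)] = ((FreeGroup.of a) ^ 1)⁻¹ := by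
          rw [← mk_replicate_false 1 a]; rfl
        rw [h1, pow_one, MonoidHom.map_inv par]
        have : par (FreeGroup.of a) = Multiplicative.ofAdd (1 : ZMod 2) :=
          FreeGroup.lift_apply_of
        rw [this]
        decide
      · have h1 : FreeGroup.mk [(a, true)] = FreeGroup.of a := rfl
        rw [h1]
        exact FreeGroup.lift_apply_of
    rw [hx]
    rw [← ofAdd_add]
    congr 1
    simp only [List.singleton_append, List.length_cons]
    push_cast
    ring

lemma par_eq_norm (g : FreeGroup A) :
    par g = Multiplicative.ofAdd ((g.norm : ZMod 2)) := by
  have := par_mk g.toWord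
  rwa [FreeGroup.mk_toWord] at this
end Parity
section Count
open FreeGroup List

/-- Reduced words of length `n` starting with `a`. -/
def SA (a : Fin 2 × Bool) (n : ℕ) : Set (List (Fin 2 × Bool)) :=
  {L | Chain' NRed L ∧ L.length = n ∧ L.head? = some a}

/-- Reduced words of length `n`. -/
def SB (n : ℕ) : Set (List (Fin 2 × Bool)) :=
  {L | Chain' NRed L ∧ L.length = n}

lemma finite_SA (a : Fin 2 × Bool) (n : ℕ) : (SA a n).Finite :=
  (List.finite_length_eq _ n).subset fun _ hL => hL.2.1

lemma finite_SB (n : ℕ) : (SB n).Finite :=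
  (List.finite_length_eq _ n).subset fun _ hL => hL.2

lemma disj_SA {a a' : Fin 2 × Bool} (h : a ≠ a') (n : ℕ) : Disjoint (SA a n) (SA a' n) := by
  rw [Set.disjoint_left]
  rintro L ⟨_, _, h1⟩ ⟨_, _, h2⟩
  rw [h1, Option.some.injEq] at h2
  exact h h2

lemma SB_eq_union (n : ℕ) :
    SB (n + 1) = SA (0, false) (n + 1) ∪ SA (0, true) (n + 1) ∪ SA (1, false) (n + 1)
      ∪ SA (1, true) (n + 1) := by
  have hc4 : ∀ c : Fin 2 × Bool,
      c = (0, false) ∨ c = (0, true) ∨ c = (1, false) ∨ c = (1, true) := by decide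
  ext L
  constructor
  · rintro ⟨hch, hlen⟩
    cases L with
    | nil => simp at hlen
    | cons c L' =>
      rcases hc4 c with rfl | rfl | rfl | rfl
      · exact Or.inl (Or.inl (Or.inl ⟨hch, hlen, rfl⟩))
      · exact Or.inl (Or.inl (Or.inr ⟨hch, hlen, rfl⟩))
      · exact Or.inl (Or.inr ⟨hch, hlen, rfl⟩)
      · exact Or.inr ⟨hch, hlen, rfl⟩
  · rintro (((⟨h1, h2, _⟩ | ⟨h1, h2, _⟩) | ⟨h1, h2, _⟩) | ⟨h1, h2, _⟩) <;> exact ⟨h1, h2⟩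

lemma card_SB_of {n : ℕ} (h : ∀ a, (SA a (n + 1)).ncard = 3 ^ n) :
    (SB (n + 1)).ncard = 4 * 3 ^ n := by
  rw [SB_eq_union n]
  rw [Set.ncard_union_eq (by
        refine Set.disjoint_union_left.mpr ⟨Set.disjoint_union_left.mpr ⟨?_, ?_⟩, ?_⟩ <;>
          exact disj_SA (by decide) _)
      (((finite_SA _ _).union (finite_SA _ _)).union (finite_SA _ _)) (finite_SA _ _),
    Set.ncard_union_eq (Set.disjoint_union_left.mpr ⟨disj_SA (by decide) _, disj_SA (by decide) _⟩)
      ((finite_SA _ _).union (finite_SA _ _)) (finite_SA _ _),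
    Set.ncard_union_eq (disj_SA (by decide) _) (finite_SA _ _) (finite_SA _ _)]
  rw [h, h, h, h]
  ring

lemma SA_succ (a : Fin 2 × Bool) (n : ℕ) :
    SA a (n + 2) = (a :: ·) '' (SB (n + 1) \ SA (a.1, !a.2) (n + 1)) := by
  ext L
  constructor
  · rintro ⟨hch, hlen, hhead⟩
    cases L with
    | nil => simp at hlen
    | cons c L' =>
      rw [List.head?_cons, Option.some.injEq] at hhead
      subst hhead
      refine ⟨L', ⟨⟨hch.tail, by simpa using hlen⟩, ?_⟩, rfl⟩
      rintro ⟨_, _, hh⟩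
      have := (List.isChain_cons.mp hch).1 _ hh
      exact this ⟨rfl, by simp⟩
  · rintro ⟨L', ⟨⟨hch, hlen⟩, hnot⟩, rfl⟩
    have hL' : L' ≠ [] := by intro h; rw [h] at hlen; simp at hlen
    refine ⟨?_, by simpa using hlen, rfl⟩
    rw [List.isChain_cons]
    refine ⟨?_, hch⟩
    intro y hy
    intro ⟨h1, h2⟩
    apply hnot
    refine ⟨hch, hlen, ?_⟩
    rw [hy]
    congr 1
    rcases y with ⟨y1, y2⟩
    simp only at h1 h2
    refine Prod.ext h1.symm ?_
    simp only
    cases y2 <;> cases ha2 : a.2 <;> simp_all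

lemma SA_subset_SB (a : Fin 2 × Bool) (n : ℕ) : SA a n ⊆ SB n := by
  intro L hL
  simp only [SA, Set.mem_setOf_eq] at hL
  simp only [SB, Set.mem_setOf_eq]
  exact ⟨hL.1, hL.2.1⟩

lemma card_SA : ∀ (n : ℕ) (a : Fin 2 × Bool), (SA a (n + 1)).ncard = 3 ^ n := by
  intro n
  induction n with
  | zero =>
    intro a
    have : SA a 1 = {[a]} := by
      ext L
      constructor
      · rintro ⟨_, hlen, hhead⟩
        obtain ⟨b, rfl⟩ := List.length_eq_one_iff.mp hlen
        rw [List.head?_cons, Option.some.injEq] at hhead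
        rw [hhead]
        rfl
      · rintro rfl
        simp only [SA, Set.mem_setOf_eq]
        exact ⟨List.isChain_singleton a, rfl, rfl⟩
    rw [this, Set.ncard_singleton]
    rfl
  | succ n ih =>
    intro a
    have hB := card_SB_of ih
    rw [SA_succ, Set.ncard_image_of_injective _ (List.cons_injective),
      Set.ncard_diff (SA_subset_SB _ _) (finite_SA _ _), hB, ih]
    have h3 : (3:ℕ) ^ n ≤ 4 * 3 ^ n := by omega
    rw [pow_succ]
    omega

lemma card_SB (n : ℕ) : (SB (n + 1)).ncard = 4 * 3 ^ n := card_SB_of (card_SA n)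
end Count
section Assembly
open FreeGroup List

/-- Index set: (letter x, run length t, prefix u). -/
def IdxSet (r : ℕ) : Set ((Fin 2 × Bool) × ℕ × List (Fin 2 × Bool)) :=
  {p | 1 ≤ p.2.1 ∧ p.2.1 + p.2.2.length = r + 1 ∧ Chain' NRed p.2.2 ∧
       ∀ a ∈ p.2.2.getLast?, a.1 ≠ p.1.1}

def Fm (p : (Fin 2 × Bool) × ℕ × List (Fin 2 × Bool)) : F2 :=
  FreeGroup.mk (p.2.2 ++ (List.replicate (2 * p.2.1 - 1) p.1 ++ FreeGroup.invRev p.2.2))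

def Gm (p : (Fin 2 × Bool) × ℕ × List (Fin 2 × Bool)) : F2 :=
  FreeGroup.mk (p.2.2 ++ List.replicate p.2.1 p.1)

lemma chain'_run {u : List ((Fin 2) × Bool)} (hu : Chain' NRed u) {i : Fin 2} (e : Bool) {t : ℕ}
    (ht : 1 ≤ t) (hlast : ∀ a ∈ u.getLast?, a.1 ≠ i) :
    Chain' NRed (u ++ List.replicate t (i, e)) := by
  rw [List.isChain_append]
  refine ⟨hu, chain'_NRed_replicate t _, ?_⟩
  intro x hx y hy
  rw [List.head?_replicate, if_neg (by omega), Option.mem_def, Option.some.injEq] at hy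
  subst hy
  intro ⟨h1, _⟩
  exact hlast x hx h1

lemma toWord_Fm {r : ℕ} {p : (Fin 2 × Bool) × ℕ × List (Fin 2 × Bool)} (hp : p ∈ IdxSet r) :
    (Fm p).toWord = p.2.2 ++ (List.replicate (2 * p.2.1 - 1) p.1 ++ FreeGroup.invRev p.2.2) := by
  obtain ⟨ht, hlen, hch, hlast⟩ := hp
  exact toWord_mk_eq (chain'_conj hch p.1.2 (by omega) (by rcases p.1 with ⟨i, e⟩; exact hlast))

lemma norm_Fm {r : ℕ} {p : (Fin 2 × Bool) × ℕ × List (Fin 2 × Bool)} (hp : p ∈ IdxSet r) :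
    (Fm p).norm = 2 * r + 1 := by
  have hp' := hp
  obtain ⟨ht, hlen, hch, hlast⟩ := hp'
  rw [FreeGroup.norm, toWord_Fm hp]
  simp only [List.length_append, List.length_replicate, FreeGroup.invRev_length]
  omega

lemma toWord_Gm {r : ℕ} {p : (Fin 2 × Bool) × ℕ × List (Fin 2 × Bool)} (hp : p ∈ IdxSet r) :
    (Gm p).toWord = p.2.2 ++ List.replicate p.2.1 p.1 := by
  obtain ⟨ht, hlen, hch, hlast⟩ := hp
  exact toWord_mk_eq (chain'_run hch p.1.2 ht (by rcases p.1 with ⟨i, e⟩; exact hlast))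

lemma norm_Gm {r : ℕ} {p : (Fin 2 × Bool) × ℕ × List (Fin 2 × Bool)} (hp : p ∈ IdxSet r) :
    (Gm p).norm = r + 1 := by
  have hp' := hp
  obtain ⟨ht, hlen, hch, hlast⟩ := hp'
  rw [FreeGroup.norm, toWord_Gm hp]
  simp only [List.length_append, List.length_replicate]
  omega

lemma getLast?_ne {x : Fin 2 × Bool} {u : List (Fin 2 × Bool)}
    (h : ∀ a ∈ u.getLast?, a.1 ≠ x.1) : ∀ a ∈ u.getLast?, a ≠ x := by
  intro a ha heq
  exact h a ha (by rw [heq])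

lemma injOn_Gm (r : ℕ) : Set.InjOn Gm (IdxSet r) := by
  rintro ⟨x, t, u⟩ hp ⟨x', t', u'⟩ hp' heq
  obtain ⟨ht, hlen, hch, hlast⟩ := hp
  obtain ⟨ht', hlen', hch', hlast'⟩ := hp'
  have hw : u ++ List.replicate t x = u' ++ List.replicate t' x' := by
    have := congrArg FreeGroup.toWord heq
    rwa [toWord_Gm ⟨ht, hlen, hch, hlast⟩, toWord_Gm ⟨ht', hlen', hch', hlast'⟩] at this
  obtain ⟨h1, h2, h3⟩ := run_unique ht ht' (getLast?_ne hlast) (getLast?_ne hlast') hw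
  exact Prod.ext h3 (Prod.ext h2 h1)

lemma injOn_Fm (r : ℕ) : Set.InjOn Fm (IdxSet r) := by
  rintro ⟨x, t, u⟩ hp ⟨x', t', u'⟩ hp' heq
  obtain ⟨ht, hlen, hch, hlast⟩ := hp
  obtain ⟨ht', hlen', hch', hlast'⟩ := hp'
  dsimp only at ht hlen hch hlast ht' hlen' hch' hlast'
  have hw : u ++ (List.replicate (2 * t - 1) x ++ FreeGroup.invRev u)
      = u' ++ (List.replicate (2 * t' - 1) x' ++ FreeGroup.invRev u') := by
    have := congrArg FreeGroup.toWord heq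
    rwa [toWord_Fm ⟨ht, hlen, hch, hlast⟩, toWord_Fm ⟨ht', hlen', hch', hlast'⟩] at this
  have htake := congrArg (List.take (r + 1)) hw
  rw [show r + 1 = u.length + t by omega] at htake
  rw [take_run (by omega) x] at htake
  rw [show u.length + t = u'.length + t' by omega] at htake
  rw [take_run (by omega) x'] at htake
  obtain ⟨h1, h2, h3⟩ := run_unique ht ht' (getLast?_ne hlast) (getLast?_ne hlast') htake
  exact Prod.ext h3 (Prod.ext h2 h1)

/-- The target norm set. -/
def Tset (r : ℕ) : Set F2 := {v | v.norm = r + 1}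

lemma Tset_eq_image (r : ℕ) : Tset r = Gm '' IdxSet r := by
  ext v
  constructor
  · intro hv
    have hv' : v.norm = r + 1 := hv
    have hne : v.toWord ≠ [] := by
      intro h
      rw [FreeGroup.norm, h] at hv'
      simp at hv'
    obtain ⟨u, t, x, ht, hdec, hlast⟩ := exists_run v.toWord hne
    have hch : Chain' NRed v.toWord := chain'_toWord v
    rw [hdec, List.isChain_append] at hch
    obtain ⟨hchu, hchr, hjun⟩ := hch
    have hlast1 : ∀ a ∈ u.getLast?, a.1 ≠ x.1 := by
      intro a ha h1
      have hrel := hjun a ha x (by rw [List.head?_replicate, if_neg (by omega)]; rfl)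
      have hax : a ≠ x := hlast a ha
      apply hrel
      refine ⟨h1, ?_⟩
      rcases a with ⟨a1, a2⟩; rcases x with ⟨x1, x2⟩
      simp only at h1 ⊢
      subst h1
      cases a2 <;> cases x2 <;> simp_all
    have hlen : t + u.length = r + 1 := by
      have : v.toWord.length = r + 1 := hv'
      rw [hdec] at this
      simp at this
      omega
    refine ⟨(x, t, u), ⟨ht, hlen, hchu, hlast1⟩, ?_⟩
    show FreeGroup.mk (u ++ List.replicate t x) = v
    rw [← hdec, FreeGroup.mk_toWord]
  · rintro ⟨p, hp, rfl⟩
    exact norm_Gm hp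

lemma card_Tset (r : ℕ) : (Tset r).ncard = 4 * 3 ^ r := by
  have h1 : Tset r = FreeGroup.mk '' SB (r + 1) := by
    ext v
    constructor
    · intro hv
      exact ⟨v.toWord, ⟨chain'_toWord v, hv⟩, FreeGroup.mk_toWord⟩
    · rintro ⟨L, ⟨hch, hlen⟩, rfl⟩
      show (FreeGroup.mk L).norm = r + 1
      rw [norm_mk_eq hch, hlen]
  rw [h1, Set.ncard_image_of_injOn, card_SB]
  intro L hL L' hL' heq
  have := congrArg FreeGroup.toWord heq
  rwa [toWord_mk_eq hL.1, toWord_mk_eq hL'.1] at this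
end Assembly
section Final
open FreeGroup List

lemma mk_conj (u L : List (Fin 2 × Bool)) :
    FreeGroup.mk u * FreeGroup.mk L * (FreeGroup.mk u)⁻¹
      = FreeGroup.mk (u ++ (L ++ FreeGroup.invRev u)) := by
  rw [FreeGroup.inv_mk, FreeGroup.mul_mk, FreeGroup.mul_mk, List.append_assoc]

lemma mul_self_eq_one_zmod2 (x : Multiplicative (ZMod 2)) : x * x = 1 := by
  revert x; decide

lemma par_of (i : Fin 2) : par (FreeGroup.of i) = Multiplicative.ofAdd (1 : ZMod 2) :=
  FreeGroup.lift_apply_of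

lemma par_odd {r : ℕ} {g : F2} (h : FreeGroup.norm g = 2 * r + 1) :
    par g = Multiplicative.ofAdd (1 : ZMod 2) := by
  rw [par_eq_norm, h]
  congr 1
  push_cast
  rw [show ((2 : ZMod 2)) = 0 by decide]
  ring

lemma par_conj (w γ : F2) (k : ℤ) : par (w * γ ^ k * w⁻¹) = (par γ) ^ k := by
  rw [MonoidHom.map_mul, MonoidHom.map_mul, MonoidHom.map_inv, MonoidHom.map_zpow,
    mul_comm (par w), mul_inv_cancel_right]

lemma k_odd {r : ℕ} {w : F2} {k : ℤ} {i : Fin 2}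
    (h : FreeGroup.norm (w * (FreeGroup.of i) ^ k * w⁻¹) = 2 * r + 1) : Odd k := by
  rcases Int.even_or_odd k with he | ho
  · exfalso
    obtain ⟨m, rfl⟩ := he
    have h1 := par_odd h
    rw [par_conj, par_of, zpow_add, mul_self_eq_one_zmod2] at h1
    exact absurd h1.symm (by decide)
  · exact ho

lemma mem_S_aux (r : ℕ) (i : Fin 2) (w : F2) (k : ℤ)
    (hnorm : FreeGroup.norm (w * (FreeGroup.of i) ^ k * w⁻¹) = 2 * r + 1) :
    ∃ p ∈ IdxSet r, w * (FreeGroup.of i) ^ k * w⁻¹ = Fm p := by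
  have hodd : Odd k := k_odd hnorm
  have hk0 : k ≠ 0 := by rcases hodd with ⟨m, rfl⟩; omega
  set n := k.natAbs with hn
  have hoddn : Odd n := Int.natAbs_odd.mpr hodd
  have hn1 : 1 ≤ n := Int.natAbs_pos.mpr hk0
  -- express (of i)^k as mk of a replicate
  obtain ⟨e, hXe⟩ : ∃ e : Bool,
      (FreeGroup.of i) ^ k = FreeGroup.mk (List.replicate n (i, e)) := by
    rcases lt_or_gt_of_ne hk0 with hneg | hpos
    · refine ⟨false, ?_⟩
      have hk2 : k = -(n : ℤ) := by omega
      rw [hk2, zpow_neg, zpow_natCast, mk_replicate_false]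
    · refine ⟨true, ?_⟩
      have hk2 : k = (n : ℤ) := by omega
      rw [hk2, zpow_natCast, mk_replicate_true]
  set X := FreeGroup.mk (List.replicate n (i, e)) with hX
  have hXpow : ∃ s : ℤ, X = (FreeGroup.of i) ^ s := ⟨k, hXe.symm⟩
  have hcomm : ∀ b : Bool, FreeGroup.mk [(i, b)] * X = X * FreeGroup.mk [(i, b)] := by
    intro b
    obtain ⟨s, hs⟩ := hXpow
    have hb : ∃ c : ℤ, FreeGroup.mk [(i, b)] = (FreeGroup.of i) ^ c := by
      cases b
      · refine ⟨-1, ?_⟩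
        rw [zpow_neg, zpow_one, show [((i : Fin 2), false)] = List.replicate 1 (i, false) by rfl,
          mk_replicate_false, pow_one]
      · exact ⟨1, by rw [zpow_one]; rfl⟩
    obtain ⟨c, hc⟩ := hb
    rw [hs, hc]
    exact ((Commute.refl (FreeGroup.of i)).zpow_zpow c s).eq
  obtain ⟨u, hch, hlast, heq⟩ := conj_reduce i X hcomm w
  rw [hXe] at hnorm ⊢
  rw [heq] at hnorm ⊢
  rw [mk_conj] at hnorm ⊢
  have hcw := chain'_conj hch (i := i) e hn1 hlast
  rw [norm_mk_eq hcw] at hnorm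
  simp only [List.length_append, List.length_replicate, FreeGroup.invRev_length] at hnorm
  obtain ⟨m', hm'⟩ := hoddn
  refine ⟨((i, e), m' + 1, u), ⟨by dsimp only; omega, by dsimp only; omega, hch, hlast⟩, ?_⟩
  show _ = FreeGroup.mk (u ++ (List.replicate (2 * (m' + 1) - 1) (i, e) ++ FreeGroup.invRev u))
  rw [show 2 * (m' + 1) - 1 = n by omega]

lemma Fm_mem {r : ℕ} {p : (Fin 2 × Bool) × ℕ × List (Fin 2 × Bool)} (hp : p ∈ IdxSet r) :
    ∃ (w : F2) (k : ℤ) (γ : F2), γ ∈ ({α, β, α * β} : Set F2) ∧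
      Fm p = w * γ ^ k * w⁻¹ := by
  obtain ⟨⟨i, e⟩, t, u⟩ := p
  obtain ⟨ht, hlen, hch, hlast⟩ := hp
  refine ⟨FreeGroup.mk u, if e then ((2 * t - 1 : ℕ) : ℤ) else -((2 * t - 1 : ℕ) : ℤ),
    FreeGroup.of i, ?_, ?_⟩
  · fin_cases i
    · exact Set.mem_insert _ _
    · exact Set.mem_insert_of_mem _ (Set.mem_insert _ _)
  · have hmk : FreeGroup.mk (List.replicate (2 * t - 1) (i, e))
        = (FreeGroup.of i) ^ (if e then ((2 * t - 1 : ℕ) : ℤ) else -((2 * t - 1 : ℕ) : ℤ)) := by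
      cases e
      · rw [if_neg (by simp), zpow_neg, zpow_natCast, mk_replicate_false]
      · rw [if_pos rfl, zpow_natCast, mk_replicate_true]
    rw [← hmk, mk_conj]
    rfl

lemma parity_kill {r : ℕ} {w : F2} {k : ℤ}
    (h : FreeGroup.norm (w * (α * β) ^ k * w⁻¹) = 2 * r + 1) : False := by
  have h1 := par_odd h
  rw [par_conj] at h1
  have h2 : par (α * β) = 1 := by
    rw [MonoidHom.map_mul]
    rw [show α = FreeGroup.of 0 from rfl, show β = FreeGroup.of 1 from rfl, par_of, par_of]
    decide
  rw [h2, one_zpow] at h1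
  exact absurd h1.symm (by decide)

/-- The number of elements of word length exactly `2r+1` conjugate to a power of
`α`, `β`, or `αβ` is `4·3^r`. -/
theorem card_reducible_odd (r : ℕ) :
    Nat.card {g : F2 | FreeGroup.norm g = 2 * r + 1 ∧
      ∃ (w : F2) (k : ℤ) (γ : F2), γ ∈ ({α, β, α * β} : Set F2) ∧
        g = w * γ ^ k * w⁻¹} = 4 * 3 ^ r := by
  have hset : {g : F2 | FreeGroup.norm g = 2 * r + 1 ∧
      ∃ (w : F2) (k : ℤ) (γ : F2), γ ∈ ({α, β, α * β} : Set F2) ∧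
        g = w * γ ^ k * w⁻¹} = Fm '' IdxSet r := by
    ext g
    constructor
    · rintro ⟨hnorm, w, k, γ, hγ, rfl⟩
      simp only [Set.mem_insert_iff, Set.mem_singleton_iff] at hγ
      rcases hγ with rfl | rfl | rfl
      · obtain ⟨p, hp, hpe⟩ := mem_S_aux r 0 w k hnorm
        exact ⟨p, hp, hpe.symm⟩
      · obtain ⟨p, hp, hpe⟩ := mem_S_aux r 1 w k hnorm
        exact ⟨p, hp, hpe.symm⟩
      · exact absurd hnorm parity_kill
    · rintro ⟨p, hp, rfl⟩
      obtain ⟨w, k, γ, hγ, heq⟩ := Fm_mem hp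
      exact ⟨norm_Fm hp, w, k, γ, hγ, heq⟩
  rw [Nat.card_coe_set_eq, hset, Set.ncard_image_of_injOn (injOn_Fm r),
    ← Set.ncard_image_of_injOn (injOn_Gm r), ← Tset_eq_image, card_Tset]
end Final
end

section
/- Let h_n = 2·3^n − 1 be the number of elements of word length at most n in F₂, and let r_n be the number of elements of word length at most n that are conjugates of powers of α, β, or αβ. Then r_n / h_n → 0 as n → ∞. -/
namespace RedAux

abbrev Letter := Fin 2 × Bool

/-- no cancellation between adjacent letters -/
def NC (a b : Letter) : Prop := ¬(a.1 = b.1 ∧ a.2 = !b.2)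

instance : DecidableRel NC := fun a b => by unfold NC; infer_instance

/-- inverse of a letter -/
def linv (a : Letter) : Letter := (a.1, !a.2)

lemma nc_iff (a b : Letter) : NC a b ↔ a ≠ linv b := by
  constructor
  · rintro h rfl
    exact h ⟨rfl, rfl⟩
  · rintro h ⟨h1, h2⟩
    exact h (Prod.ext h1 h2)

/-- single-letter free group element -/
def ell (a : Letter) : F2 := FreeGroup.mk [a]

lemma ell_linv (a : Letter) : ell (linv a) = (ell a)⁻¹ := by
  rw [ell, ell, FreeGroup.inv_mk]
  simp [FreeGroup.invRev, linv]

lemma chain'_reduce (L : List Letter) : List.Chain' NC (FreeGroup.reduce L) := by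
  induction L with
  | nil => simp [List.Chain']
  | cons x L ih =>
    rw [FreeGroup.reduce.cons]
    cases h : FreeGroup.reduce L with
    | nil => simp [List.Chain']
    | cons hd tl =>
      rw [h] at ih
      by_cases hc : x.1 = hd.1 ∧ x.2 = !hd.2
      · simpa only [if_pos hc, List.Chain', List.tail_cons] using ih.tail
      · simpa only [if_neg hc, List.Chain'] using List.isChain_cons_cons.mpr ⟨hc, ih⟩

lemma reduce_eq_self {L : List Letter} (h : List.Chain' NC L) :
    FreeGroup.reduce L = L := by
  induction L with
  | nil => rfl
  | cons x L ih =>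
    rw [FreeGroup.reduce.cons, ih h.tail]
    cases L with
    | nil => rfl
    | cons hd tl =>
      have hnc : ¬(x.1 = hd.1 ∧ x.2 = !hd.2) := (List.isChain_cons_cons.mp h).1
      simp only [if_neg hnc]

lemma toWord_chain' (g : F2) : List.Chain' NC g.toWord := by
  rw [← FreeGroup.reduce_toWord]; exact chain'_reduce _

/-- the patterns: a single letter, or an alternating pair with sign `s` and order `o` -/
abbrev Pat := Letter ⊕ (Bool × Bool)

def patWord : Pat → List Letter
  | .inl x => [x]
  | .inr (s, true) => [((0 : Fin 2), s), ((1 : Fin 2), s)]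
  | .inr (s, false) => [((1 : Fin 2), s), ((0 : Fin 2), s)]

def rot : Pat → Pat
  | .inl x => .inl x
  | .inr (s, o) => .inr (s, !o)

def hdP : Pat → Letter
  | .inl x => x
  | .inr (s, true) => ((0 : Fin 2), s)
  | .inr (s, false) => ((1 : Fin 2), s)

def lsP : Pat → Letter
  | .inl x => x
  | .inr (s, true) => ((1 : Fin 2), s)
  | .inr (s, false) => ((0 : Fin 2), s)

lemma patWord_ne_nil (p : Pat) : patWord p ≠ [] := by
  rcases p with x | ⟨s, o⟩ <;> [skip; cases o] <;> simp [patWord]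

lemma patWord_head (p : Pat) : (patWord p).head? = some (hdP p) := by
  rcases p with x | ⟨s, o⟩ <;> [skip; cases o] <;> simp [patWord, hdP]

lemma patWord_last (p : Pat) : (patWord p).getLast? = some (lsP p) := by
  rcases p with x | ⟨s, o⟩ <;> [skip; cases o] <;> simp [patWord, lsP]

lemma patWord_chain2 (p : Pat) : List.Chain' NC (patWord p ++ patWord p) := by
  rcases p with ⟨i, b⟩ | ⟨s, o⟩ <;> [skip; cases o] <;>
    · simp [patWord, List.isChain_cons_cons, NC, List.Chain']
      try exact fun h => by simp [Fin.ext_iff] at h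
      try decide

def coreWord (p : Pat) (m : ℕ) : List Letter := (List.replicate m (patWord p)).flatten

def coreEl (p : Pat) (m : ℕ) : F2 := (FreeGroup.mk (patWord p)) ^ m

lemma coreEl_eq_mk (p : Pat) (m : ℕ) : coreEl p m = FreeGroup.mk (coreWord p m) := by
  rw [coreEl, FreeGroup.pow_mk]; rfl

lemma chain'_flatten_replicate {l : List Letter} (hl : l ≠ [])
    (h : List.Chain' NC (l ++ l)) (m : ℕ) :
    List.Chain' NC ((List.replicate m l).flatten) := by
  induction m with
  | zero => simp [List.Chain']
  | succ m ih =>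
    rw [List.replicate_succ, List.flatten_cons]
    rcases List.isChain_append.mp h with ⟨h1, _, h3⟩
    refine List.isChain_append.mpr ⟨h1, ih, ?_⟩
    intro x hx y hy
    cases m with
    | zero => simp at hy
    | succ m =>
      refine h3 x hx y ?_
      rw [List.replicate_succ, List.flatten_cons] at hy
      cases l with
      | nil => exact absurd rfl hl
      | cons a l' => simpa using hy

lemma coreWord_chain' (p : Pat) (m : ℕ) : List.Chain' NC (coreWord p m) :=
  chain'_flatten_replicate (patWord_ne_nil p) (patWord_chain2 p) m

lemma coreEl_toWord (p : Pat) (m : ℕ) : (coreEl p m).toWord = coreWord p m := by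
  rw [coreEl_eq_mk, FreeGroup.toWord_mk, reduce_eq_self (coreWord_chain' p m)]

lemma coreWord_head (p : Pat) {m : ℕ} (hm : 1 ≤ m) :
    (coreWord p m).head? = some (hdP p) := by
  obtain ⟨m, rfl⟩ := Nat.exists_eq_add_of_le hm
  rw [coreWord, Nat.add_comm, List.replicate_succ, List.flatten_cons,
    List.head?_append_of_ne_nil _ (patWord_ne_nil p), patWord_head]

lemma coreWord_last (p : Pat) {m : ℕ} (hm : 1 ≤ m) :
    (coreWord p m).getLast? = some (lsP p) := by
  obtain ⟨m, rfl⟩ := Nat.exists_eq_add_of_le hm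
  rw [coreWord, Nat.add_comm, List.replicate_succ', List.flatten_append,
    List.getLast?_append_of_ne_nil _ (by simpa using patWord_ne_nil p)]
  simpa using patWord_last p

lemma norm_coreEl (p : Pat) (m : ℕ) :
    FreeGroup.norm (coreEl p m) = m * (patWord p).length := by
  rw [FreeGroup.norm, coreEl_toWord, coreWord]
  simp [List.length_flatten, Function.comp]

lemma le_norm_coreEl (p : Pat) {m : ℕ} (hm : 1 ≤ m) :
    m ≤ FreeGroup.norm (coreEl p m) := by
  rw [norm_coreEl]
  have : 1 ≤ (patWord p).length := by
    cases h : patWord p with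
    | nil => exact absurd h (patWord_ne_nil p)
    | cons a l => simp
  nlinarith

lemma pow_swap {G : Type*} [Group G] (a b : G) (m : ℕ) :
    (b * a) ^ m = a⁻¹ * (a * b) ^ m * a := by
  have h := conj_pow (i := m) (a := a⁻¹) (b := a * b)
  rw [inv_inv] at h
  rw [← h]
  group

lemma pow_swap' {G : Type*} [Group G] (a b : G) (m : ℕ) :
    (a * b) ^ m = a * (b * a) ^ m * a⁻¹ := by
  rw [← conj_pow]
  group

lemma coreEl_rot_head (p : Pat) (m : ℕ) :
    coreEl (rot p) m = (ell (hdP p))⁻¹ * coreEl p m * ell (hdP p) := by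
  rcases p with x | ⟨s, o⟩
  · simp only [rot, hdP, coreEl, patWord, ell]
    group
  · cases o <;>
    · simp only [rot, hdP, coreEl, patWord, ell, Bool.not_true, Bool.not_false,
        if_true, if_false]
      rw [show (FreeGroup.mk [((1:Fin 2), s), ((0:Fin 2), s)] : F2)
            = FreeGroup.mk [((1:Fin 2), s)] * FreeGroup.mk [((0:Fin 2), s)] from
          (FreeGroup.mul_mk (L₁ := [((1:Fin 2), s)]) (L₂ := [((0:Fin 2), s)])).symm,
        show (FreeGroup.mk [((0:Fin 2), s), ((1:Fin 2), s)] : F2)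
            = FreeGroup.mk [((0:Fin 2), s)] * FreeGroup.mk [((1:Fin 2), s)] from
          (FreeGroup.mul_mk (L₁ := [((0:Fin 2), s)]) (L₂ := [((1:Fin 2), s)])).symm]
      exact pow_swap _ _ _

lemma coreEl_rot_last (p : Pat) (m : ℕ) :
    coreEl (rot p) m = ell (lsP p) * coreEl p m * (ell (lsP p))⁻¹ := by
  rcases p with x | ⟨s, o⟩
  · simp only [rot, lsP, coreEl, patWord, ell]
    group
  · cases o <;>
    · simp only [rot, lsP, coreEl, patWord, ell, Bool.not_true, Bool.not_false,
        if_true, if_false]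
      rw [show (FreeGroup.mk [((1:Fin 2), s), ((0:Fin 2), s)] : F2)
            = FreeGroup.mk [((1:Fin 2), s)] * FreeGroup.mk [((0:Fin 2), s)] from
          (FreeGroup.mul_mk (L₁ := [((1:Fin 2), s)]) (L₂ := [((0:Fin 2), s)])).symm,
        show (FreeGroup.mk [((0:Fin 2), s), ((1:Fin 2), s)] : F2)
            = FreeGroup.mk [((0:Fin 2), s)] * FreeGroup.mk [((1:Fin 2), s)] from
          (FreeGroup.mul_mk (L₁ := [((0:Fin 2), s)]) (L₂ := [((1:Fin 2), s)])).symm]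
      exact pow_swap' _ _ _

lemma linv_linv (a : Letter) : linv (linv a) = a := by simp [linv]

lemma main_ind : ∀ (N : ℕ) (w : F2) (p : Pat) (m : ℕ), 1 ≤ m → FreeGroup.norm w ≤ N →
    ∃ (v : F2) (q : Pat), w * coreEl p m * w⁻¹ = v * coreEl q m * v⁻¹ ∧
      FreeGroup.norm (w * coreEl p m * w⁻¹)
        = 2 * FreeGroup.norm v + FreeGroup.norm (coreEl q m) := by
  intro N
  induction N with
  | zero =>
    intro w p m hm hw
    have hw1 : w = 1 := by rwa [Nat.le_zero, FreeGroup.norm_eq_zero] at hw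
    subst hw1
    exact ⟨1, p, by simp, by simp⟩
  | succ N ih =>
    intro w p m hm hw
    rcases List.eq_nil_or_concat' w.toWord with hW | ⟨l, x, hW⟩
    · have hw1 : w = 1 := FreeGroup.toWord_eq_nil_iff.mp hW
      subst hw1
      exact ⟨1, p, by simp, by simp⟩
    · have hch : List.Chain' NC (l ++ [x]) := hW ▸ toWord_chain' w
      have hl : FreeGroup.reduce l = l := reduce_eq_self (List.isChain_append.mp hch).1
      set w' : F2 := FreeGroup.mk l with hw'def
      have hw'toWord : w'.toWord = l := by rw [hw'def, FreeGroup.toWord_mk, hl]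
      have hwsplit : w = w' * ell x := by
        rw [hw'def, ell, FreeGroup.mul_mk, ← hW, FreeGroup.mk_toWord]
      have hnormw : FreeGroup.norm w = l.length + 1 := by
        rw [FreeGroup.norm, hW]; simp
      have hnw' : FreeGroup.norm w' ≤ N := by
        have : FreeGroup.norm w' = l.length := by rw [FreeGroup.norm, hw'toWord]
        omega
      by_cases h1 : x = linv (hdP p)
      · have key : w * coreEl p m * w⁻¹ = w' * coreEl (rot p) m * w'⁻¹ := by
          rw [hwsplit, h1, ell_linv, coreEl_rot_head]
          group
        rw [key]
        exact ih w' (rot p) m hm hnw'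
      · by_cases h2 : x = lsP p
        · have key : w * coreEl p m * w⁻¹ = w' * coreEl (rot p) m * w'⁻¹ := by
            rw [hwsplit, h2, coreEl_rot_last]
            group
          rw [key]
          exact ih w' (rot p) m hm hnw'
        · refine ⟨w, p, rfl, ?_⟩
          have hCne : coreWord p m ≠ [] := by
            intro h
            have := coreWord_head p hm
            rw [h] at this
            simp at this
          have hmkeq : w * coreEl p m * w⁻¹
              = FreeGroup.mk (w.toWord ++ coreWord p m ++ FreeGroup.invRev w.toWord) := by
            conv_lhs => rw [← FreeGroup.mk_toWord (x := w)]
            rw [coreEl_eq_mk, FreeGroup.inv_mk, FreeGroup.mul_mk, FreeGroup.mul_mk]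
          have hchain : List.Chain' NC
              (w.toWord ++ coreWord p m ++ FreeGroup.invRev w.toWord) := by
            refine List.isChain_append.mpr ⟨List.isChain_append.mpr
              ⟨toWord_chain' w, coreWord_chain' p m, ?_⟩, ?_, ?_⟩
            · intro a ha b hb
              rw [hW, List.getLast?_concat] at ha
              rw [coreWord_head p hm] at hb
              simp only [Option.mem_def, Option.some_inj] at ha hb
              subst ha; subst hb
              exact (nc_iff _ _).mpr h1
            · rw [← FreeGroup.toWord_inv]
              exact toWord_chain' w⁻¹
            · intro a ha b hb
              rw [List.getLast?_append_of_ne_nil _ hCne, coreWord_last p hm] at ha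
              have hinv : FreeGroup.invRev w.toWord = linv x :: FreeGroup.invRev l := by
                rw [hW]
                simp [FreeGroup.invRev, linv]
              rw [hinv] at hb
              simp only [Option.mem_def, Option.some_inj, List.head?_cons] at ha hb
              subst ha; subst hb
              refine (nc_iff _ _).mpr ?_
              rw [linv_linv]
              intro h
              exact h2 h.symm
          rw [hmkeq, FreeGroup.norm, FreeGroup.toWord_mk, reduce_eq_self hchain]
          have h1' : FreeGroup.norm (coreEl p m) = (coreWord p m).length := by
            rw [FreeGroup.norm, coreEl_toWord]
          have h2' : FreeGroup.norm w = w.toWord.length := rfl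
          simp only [List.length_append, FreeGroup.invRev_length]
          omega

end RedAux

open RedAux in
lemma gamma_pow_eq_coreEl {γ : F2} (hγ : γ ∈ ({α, β, α * β} : Set F2)) {k : ℤ} (hk : k ≠ 0) :
    ∃ p : Pat, γ ^ k = coreEl p k.natAbs := by
  have habs : γ ^ k = γ ^ (k.natAbs : ℕ) ∨ γ ^ k = (γ⁻¹) ^ (k.natAbs : ℕ) := by
    rcases lt_or_gt_of_ne hk with h | h
    · right
      rw [inv_pow, ← zpow_natCast, ← zpow_neg]
      congr 1
      omega
    · left
      rw [← zpow_natCast]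
      congr 1
      omega
  have hα : α = FreeGroup.mk (patWord (.inl ((0 : Fin 2), true))) := rfl
  have hβ : β = FreeGroup.mk (patWord (.inl ((1 : Fin 2), true))) := rfl
  have hαβ : α * β = FreeGroup.mk (patWord (.inr (true, true))) := by
    rw [hα, hβ]
    simp only [patWord]
    exact FreeGroup.mul_mk (L₁ := [((0 : Fin 2), true)]) (L₂ := [((1 : Fin 2), true)])
  have hαi : α⁻¹ = FreeGroup.mk (patWord (.inl ((0 : Fin 2), false))) := by
    rw [hα, FreeGroup.inv_mk]
    simp [patWord, FreeGroup.invRev]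
  have hβi : β⁻¹ = FreeGroup.mk (patWord (.inl ((1 : Fin 2), false))) := by
    rw [hβ, FreeGroup.inv_mk]
    simp [patWord, FreeGroup.invRev]
  have hαβi : (α * β)⁻¹ = FreeGroup.mk (patWord (.inr (false, false))) := by
    rw [hαβ, FreeGroup.inv_mk]
    simp [patWord, FreeGroup.invRev]
  simp only [Set.mem_insert_iff, Set.mem_singleton_iff] at hγ
  rcases habs with h | h <;> rcases hγ with rfl | rfl | rfl
  · exact ⟨.inl ((0 : Fin 2), true), by rw [h, coreEl, ← hα]⟩
  · exact ⟨.inl ((1 : Fin 2), true), by rw [h, coreEl, ← hβ]⟩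
  · exact ⟨.inr (true, true), by rw [h, coreEl, ← hαβ]⟩
  · exact ⟨.inl ((0 : Fin 2), false), by rw [h, coreEl, ← hαi]⟩
  · exact ⟨.inl ((1 : Fin 2), false), by rw [h, coreEl, ← hβi]⟩
  · exact ⟨.inr (false, false), by rw [h, coreEl, ← hαβi]⟩

open RedAux in
lemma rep_of_mem {n : ℕ} {g : F2}
    (hg : g ∈ {g : F2 | FreeGroup.norm g ≤ n ∧
      ∃ (w : F2) (k : ℤ) (γ : F2), k ≠ 0 ∧ γ ∈ ({α, β, α * β} : Set F2) ∧
        g = w * γ ^ k * w⁻¹}) :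
    ∃ (v : F2) (q : Pat) (m : ℕ), FreeGroup.norm v ≤ n / 2 ∧ 1 ≤ m ∧ m ≤ n ∧
      g = v * coreEl q m * v⁻¹ := by
  obtain ⟨hn, w, k, γ, hk, hγ, hgeq⟩ := hg
  obtain ⟨p, hp⟩ := gamma_pow_eq_coreEl hγ hk
  set m := k.natAbs with hm
  have hm1 : 1 ≤ m := by omega
  obtain ⟨v, q, heq, hnorm⟩ := main_ind (FreeGroup.norm w) w p m hm1 le_rfl
  have hgv : g = v * coreEl q m * v⁻¹ := by rw [hgeq, hp, heq]
  have hng : FreeGroup.norm g = 2 * FreeGroup.norm v + FreeGroup.norm (coreEl q m) := by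
    rw [hgeq, hp]
    exact hnorm
  have hmle : m ≤ FreeGroup.norm (coreEl q m) := le_norm_coreEl q hm1
  exact ⟨v, q, m, by omega, hm1, by omega, hgv⟩

/-- Number of reducible-type elements of word length at most `n`. -/
noncomputable def redBall (n : ℕ) : ℕ :=
  Nat.card {g : F2 | FreeGroup.norm g ≤ n ∧
    ∃ (w : F2) (k : ℤ) (γ : F2), k ≠ 0 ∧ γ ∈ ({α, β, α * β} : Set F2) ∧
      g = w * γ ^ k * w⁻¹}

/-- Number of all elements of word length at most `n`. -/
noncomputable def ball (n : ℕ) : ℕ :=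
  Nat.card {g : F2 | FreeGroup.norm g ≤ n}

open RedAux in
lemma redBall_le (n : ℕ) (hfin : Finite {g : F2 | FreeGroup.norm g ≤ n / 2}) :
    redBall n ≤ Nat.card {g : F2 | FreeGroup.norm g ≤ n / 2} * (8 * (n + 1)) := by
  classical
  set S := {g : F2 | FreeGroup.norm g ≤ n ∧
      ∃ (w : F2) (k : ℤ) (γ : F2), k ≠ 0 ∧ γ ∈ ({α, β, α * β} : Set F2) ∧
        g = w * γ ^ k * w⁻¹} with hS
  have hrep : ∀ g : S, ∃ (v : F2) (q : Pat) (m : ℕ), FreeGroup.norm v ≤ n / 2 ∧ 1 ≤ m ∧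
      m ≤ n ∧ (g : F2) = v * coreEl q m * v⁻¹ :=
    fun g => rep_of_mem g.2
  choose v q m hv hm1 hmn hrepr using hrep
  let f : S → {g : F2 | FreeGroup.norm g ≤ n / 2} × Pat × Fin (n + 1) :=
    fun g => (⟨v g, hv g⟩, q g, ⟨m g, by have := hmn g; omega⟩)
  have hinj : Function.Injective f := by
    intro g₁ g₂ hf
    have h1 : v g₁ = v g₂ := congrArg (fun t => (t.1 : F2)) hf
    have h2 : q g₁ = q g₂ := congrArg (fun t => t.2.1) hf
    have h3 : m g₁ = m g₂ := congrArg (fun t => (t.2.2 : ℕ)) hf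
    apply Subtype.ext
    rw [hrepr g₁, hrepr g₂, h1, h2, h3]
  have hcard : Nat.card S ≤ Nat.card
      ({g : F2 | FreeGroup.norm g ≤ n / 2} × Pat × Fin (n + 1)) :=
    Nat.card_le_card_of_injective f hinj
  have hPat : Nat.card Pat = 8 := by
    rw [Nat.card_eq_fintype_card]
    rfl
  rw [Nat.card_prod, Nat.card_prod, hPat, Nat.card_eq_fintype_card (α := Fin (n+1)),
    Fintype.card_fin] at hcard
  calc redBall n = Nat.card S := rfl
    _ ≤ _ := by nlinarith [hcard]


/-- The proportion of reducible-type elements in the ball of radius `n` tends to `0`;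
here the number of all elements in the ball is `h n = 2·3^n − 1`. -/
theorem reducible_proportion_tendsto_zero
    (hball : ∀ n, ball n = 2 * 3 ^ n - 1) :
    Filter.Tendsto (fun n => (redBall n : ℝ) / (ball n : ℝ))
      Filter.atTop (nhds 0) := by
  have hfin : ∀ k : ℕ, Finite {g : F2 | FreeGroup.norm g ≤ k} := by
    intro k
    have hpos : 0 < Nat.card {g : F2 | FreeGroup.norm g ≤ k} := by
      have h1 : Nat.card {g : F2 | FreeGroup.norm g ≤ k} = ball k := rfl
      have h3 : 1 ≤ 3 ^ k := Nat.one_le_pow _ _ (by norm_num)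
      rw [h1, hball]
      omega
    exact (Nat.card_pos_iff.mp hpos).2
  have s3pos : 0 < Real.sqrt 3 := Real.sqrt_pos.mpr (by norm_num)
  have s3one : 1 ≤ Real.sqrt 3 := by
    rw [show (1:ℝ) = Real.sqrt 1 from Real.sqrt_one.symm]
    exact Real.sqrt_le_sqrt (by norm_num)
  have hsq : Real.sqrt 3 * Real.sqrt 3 = 3 := Real.mul_self_sqrt (by norm_num)
  have hnum : ∀ n : ℕ, (redBall n : ℝ) ≤ 16 * (n + 1) * Real.sqrt 3 ^ n := by
    intro n
    have h1 : redBall n ≤ (2 * 3 ^ (n / 2) - 1) * (8 * (n + 1)) := by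
      have h := redBall_le n (hfin (n / 2))
      rwa [show Nat.card {g : F2 | FreeGroup.norm g ≤ n / 2} = ball (n / 2) from rfl,
        hball] at h
    have h3 : 1 ≤ 3 ^ (n / 2) := Nat.one_le_pow _ _ (by norm_num)
    have h2 : (redBall n : ℝ) ≤ 2 * (3:ℝ) ^ (n / 2) * (8 * (n + 1)) := by
      have hle : redBall n ≤ 2 * 3 ^ (n / 2) * (8 * (n + 1)) := le_trans h1 (Nat.mul_le_mul_right _ (by omega))
      calc (redBall n : ℝ) ≤ ((2 * 3 ^ (n / 2) * (8 * (n + 1)) : ℕ) : ℝ) :=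
            Nat.cast_le.mpr hle
        _ = 2 * (3:ℝ) ^ (n / 2) * (8 * (n + 1)) := by push_cast; ring
    have h4 : (3:ℝ) ^ (n / 2) ≤ Real.sqrt 3 ^ n := by
      calc (3:ℝ) ^ (n / 2) = (Real.sqrt 3 ^ 2) ^ (n / 2) := by rw [sq, hsq]
        _ = Real.sqrt 3 ^ (2 * (n / 2)) := by rw [← pow_mul]
        _ ≤ Real.sqrt 3 ^ n := pow_le_pow_right₀ s3one (by omega)
    nlinarith [pow_pos s3pos n, Nat.cast_nonneg (α := ℝ) n]
  have hden : ∀ n : ℕ, (Real.sqrt 3 ^ n) ^ 2 ≤ (ball n : ℝ) := by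
    intro n
    have h1 : (Real.sqrt 3 ^ n) ^ 2 = (3:ℝ) ^ n := by
      rw [← pow_mul, mul_comm, pow_mul, sq, hsq]
    have h3 : 1 ≤ 3 ^ n := Nat.one_le_pow _ _ (by norm_num)
    have h2 : (ball n : ℝ) = 2 * (3:ℝ) ^ n - 1 := by
      rw [hball, Nat.cast_sub (by omega)]
      push_cast
      ring
    have h5 : (1:ℝ) ≤ (3:ℝ) ^ n := by
      calc (1:ℝ) = 1 ^ n := (one_pow n).symm
        _ ≤ (3:ℝ) ^ n := pow_le_pow_left₀ (by norm_num) (by norm_num) n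
    rw [h1, h2]
    linarith
  have hfrac : ∀ n : ℕ, (redBall n : ℝ) / (ball n : ℝ)
      ≤ 16 * (n + 1) * ((Real.sqrt 3)⁻¹) ^ n := by
    intro n
    have hpow : (0:ℝ) < Real.sqrt 3 ^ n := pow_pos s3pos n
    have hdiv := div_le_div₀ (by positivity) (hnum n) (by positivity) (hden n)
    calc (redBall n : ℝ) / (ball n : ℝ)
        ≤ (16 * (n + 1) * Real.sqrt 3 ^ n) / ((Real.sqrt 3 ^ n) ^ 2) := hdiv
      _ = 16 * (n + 1) * ((Real.sqrt 3)⁻¹) ^ n := by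
          rw [sq, mul_div_mul_right _ _ hpow.ne', div_eq_mul_inv, inv_pow]
  have hlt1 : (Real.sqrt 3)⁻¹ < 1 := by
    have h13 : (1:ℝ) < Real.sqrt 3 := by
      rw [show (1:ℝ) = Real.sqrt 1 from Real.sqrt_one.symm]
      exact Real.sqrt_lt_sqrt (by norm_num) (by norm_num)
    exact inv_lt_one_of_one_lt₀ h13
  have h0r : (0:ℝ) ≤ (Real.sqrt 3)⁻¹ := by positivity
  have hlim : Filter.Tendsto (fun n : ℕ => 16 * ((n:ℝ) + 1) * ((Real.sqrt 3)⁻¹) ^ n)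
      Filter.atTop (nhds 0) := by
    have t1 := tendsto_self_mul_const_pow_of_lt_one h0r hlt1
    have t2 := tendsto_pow_atTop_nhds_zero_of_lt_one h0r hlt1
    have t3 := (t1.const_mul (16:ℝ)).add (t2.const_mul (16:ℝ))
    simp only [mul_zero, add_zero] at t3
    exact t3.congr fun n => by ring
  exact squeeze_zero (fun n => by positivity) hfrac hlim
end
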